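/- arXiv:2603.15048 — 13 statements merged into one kernel-verified Lean document; each statement's English description precedes it below -/
import Mathlib

section
/- Let f : R → S be a homomorphism of associative rings. Then the forgetful (restriction of scalars) functor from left S-modules to left R-modules is fully faithful if and only if f is an epimorphism in the category of rings. -/
universe u

/-- `f` is an epimorphism in the category of (associative unital) rings. -/
def RingHom.IsRingEpi {R S : Type u} [Ring R] [Ring S] (f : R →+* S) : Prop :=
  ∀ (T : Type u) [Ring T] (g h : S →+* T), g.comp f = h.comp f → g = h

section Aux

variable {S : Type u} [Ring S] {M N : Type u} [AddCommGroup M] [AddCommGroup N]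
  [Module S M] [Module S N]

/-- Right action of `Sᵐᵒᵖ` on `M →+ N` via the domain. -/
def opModuleAddMonoidHom : Module Sᵐᵒᵖ (M →+ N) where
  smul s u := u.comp (DistribMulAction.toAddMonoidHom M s.unop)
  one_smul u := by
    ext m
    show u ((1 : Sᵐᵒᵖ).unop • m) = u m
    rw [MulOpposite.unop_one, one_smul]
  mul_smul a b u := by
    ext m
    show u ((a * b).unop • m) = u (b.unop • a.unop • m)
    rw [MulOpposite.unop_mul, mul_smul]
  smul_zero s := by ext m; rfl
  smul_add s u v := by ext m; rfl
  add_smul a b u := by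
    ext m
    show u ((a + b).unop • m) = u (a.unop • m) + u (b.unop • m)
    rw [MulOpposite.unop_add, add_smul, u.map_add]
  zero_smul u := by
    ext m
    show u ((0 : Sᵐᵒᵖ).unop • m) = 0
    rw [MulOpposite.unop_zero, zero_smul, u.map_zero]

end Aux

/-- The forgetful (restriction of scalars) functor from left `S`-modules to left
`R`-modules is fully faithful if and only if `f` is an epimorphism of rings. -/
theorem restrictScalars_full_faithful_iff_ringEpi
    {R S : Type u} [Ring R] [Ring S] (f : R →+* S) :
    ((ModuleCat.restrictScalars.{u} f).Full ∧ (ModuleCat.restrictScalars.{u} f).Faithful)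
      ↔ f.IsRingEpi := by
  constructor
  · rintro ⟨hFull, -⟩ T _ g h hgf
    letI modG : Module S T := Module.compHom T g
    letI modH : Module S T := Module.compHom T h
    let Mg : ModuleCat.{u} S := @ModuleCat.of S _ T _ modG
    let Mh : ModuleCat.{u} S := @ModuleCat.of S _ T _ modH
    have hsmul : ∀ (r : R) (t : T), (g (f r) : T) • t = (h (f r) : T) • t := fun r t => by
      rw [show g (f r) = h (f r) from RingHom.congr_fun hgf r]
    let e : (ModuleCat.restrictScalars.{u} f).obj Mg ⟶
        (ModuleCat.restrictScalars.{u} f).obj Mh :=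
      @ModuleCat.ofHom R _ _ _ _ ((ModuleCat.restrictScalars.{u} f).obj Mg).isModule _
        ((ModuleCat.restrictScalars.{u} f).obj Mh).isModule
      { toFun := fun t => t
        map_add' := fun _ _ => rfl
        map_smul' := fun r t => hsmul r t }
    obtain ⟨ψ, hψ⟩ := hFull.map_surjective (X := Mg) (Y := Mh) e
    let ψ' : T → T := fun x => ψ x
    have hψ' : ∀ t : T, ψ' t = t := fun t => LinearMap.congr_fun (congrArg ModuleCat.Hom.hom hψ) t
    ext s
    -- `ψ (s • 1) = s • ψ 1` where source smul is via `g`, target via `h`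
    have e1 : ψ' (g s * 1) = h s * ψ' (1 : T) := @LinearMap.map_smul' _ _ _ _ _ _ _ _ _ Mg.isModule Mh.isModule ψ.hom' s (1 : T)
    rw [hψ', hψ', mul_one, mul_one] at e1
    exact e1
  · intro hepi
    refine ⟨⟨?_⟩, inferInstance⟩
    intro M N φ
    letI : Module Sᵐᵒᵖ (M →+ N) := opModuleAddMonoidHom
    haveI : SMulCommClass S Sᵐᵒᵖ (M →+ N) := ⟨fun s t u => by ext m; rfl⟩
    -- the derivation measuring failure of `S`-linearity of `φ`
    let d : S → (M →+ N) := fun s =>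
      { toFun := fun m => s • φ m - φ (s • m)
        map_zero' := by
          have φ0 : φ (0 : M) = 0 := φ.hom.map_zero
          simp [φ0]; rfl
        map_add' := fun m m' => by
          have φa : ∀ x y : M, φ (x + y) = φ x + φ y := fun x y => φ.hom.map_add x y
          simp only [φa, smul_add]
          abel }
    have d_apply : ∀ s m, d s m = s • φ m - φ (s • m) := fun _ _ => rfl
    let T := TrivSqZeroExt S (M →+ N)
    let g : S →+* T := TrivSqZeroExt.inlHom S (M →+ N)
    have dmul : ∀ s s' : S, d (s * s') = s • d s' + MulOpposite.op s' • d s := by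
      intro s s'
      ext m
      show (s * s') • φ m - φ ((s * s') • m) =
        (s • (s' • φ m - φ (s' • m))) + (s • φ (s' • m) - φ (s • s' • m))
      rw [mul_smul, mul_smul, smul_sub]
      abel
    let h : S →+* T :=
      { toFun := fun s => TrivSqZeroExt.inl s + TrivSqZeroExt.inr (d s)
        map_one' := by
          show TrivSqZeroExt.inl 1 + TrivSqZeroExt.inr (d 1) = 1
          have h1 : d 1 = 0 := by ext m; simp [d_apply]; rfl
          simp [h1]
        map_mul' := fun s s' => by
          show TrivSqZeroExt.inl (s * s') + TrivSqZeroExt.inr (d (s * s')) =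
            (TrivSqZeroExt.inl s + TrivSqZeroExt.inr (d s)) *
              (TrivSqZeroExt.inl s' + TrivSqZeroExt.inr (d s'))
          rw [add_mul, mul_add, mul_add, TrivSqZeroExt.inl_mul_inl,
            TrivSqZeroExt.inl_mul_inr, TrivSqZeroExt.inr_mul_inl,
            TrivSqZeroExt.inr_mul_inr, add_zero, dmul,
            TrivSqZeroExt.inr_add, add_assoc]
        map_zero' := by
          show TrivSqZeroExt.inl 0 + TrivSqZeroExt.inr (d 0) = 0
          have h1 : d 0 = 0 := by ext m; simp [d_apply]; exact neg_eq_zero.mpr φ.hom.map_zero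
          simp [h1]
        map_add' := fun s s' => by
          have : d (s + s') = d s + d s' := by
            ext m
            show (s + s') • φ m - φ ((s + s') • m) =
              (s • φ m - φ (s • m)) + (s' • φ m - φ (s' • m))
            rw [add_smul, add_smul, show φ (s • m + s' • m) = φ (s • m) + φ (s' • m) from φ.hom.map_add _ _]
            abel
          show TrivSqZeroExt.inl (s + s') + TrivSqZeroExt.inr (d (s + s')) =
            (TrivSqZeroExt.inl s + TrivSqZeroExt.inr (d s)) +
              (TrivSqZeroExt.inl s' + TrivSqZeroExt.inr (d s'))
          rw [this, TrivSqZeroExt.inl_add, TrivSqZeroExt.inr_add]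
          abel }
    have hcomp : g.comp f = h.comp f := RingHom.ext fun r => by
      have hdr : d (f r) = 0 := by
        ext m
        show f r • φ m - φ (f r • m) = 0
        exact sub_eq_zero_of_eq (φ.hom.map_smul r m).symm
      show TrivSqZeroExt.inl (f r) =
        TrivSqZeroExt.inl (f r) + TrivSqZeroExt.inr (d (f r))
      rw [hdr, TrivSqZeroExt.inr_zero, add_zero]
    have hgh := hepi T g h hcomp
    have hd : ∀ s, d s = 0 := by
      intro s
      have := RingHom.congr_fun hgh s
      have h2 : TrivSqZeroExt.inr (d s) = (0 : T) := by
        have : TrivSqZeroExt.inl s = TrivSqZeroExt.inl s + TrivSqZeroExt.inr (d s) := this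
        rwa [left_eq_add] at this
      exact TrivSqZeroExt.inr_injective (by rw [h2, TrivSqZeroExt.inr_zero])
    refine ⟨ModuleCat.ofHom { toFun := φ, map_add' := φ.hom.map_add, map_smul' := ?_ }, ?_⟩
    · intro s m
      have h1 := DFunLike.congr_fun (hd s) m
      rw [AddMonoidHom.zero_apply] at h1
      have h2 : s • φ m - φ (s • m) = 0 := h1
      show φ (s • m) = s • φ m
      exact (sub_eq_zero.mp h2).symm
    · rfl
end

section
/- Let R and S be topological rings in which open right ideals form a base of neighborhoods of zero, and let f : R → S be a ring homomorphism. Then f is continuous if and only if every right S-module on which every element has open annihilator (a discrete right S-module) is also, via restriction of scalars along f, a right R-module on which every element has open annihilator. -/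
universe u

open MulOpposite

/-- A topological ring is right linear if its open right ideals form a base of
neighborhoods of zero. -/
def IsRightLinearTopology (R : Type u) [Ring R] [TopologicalSpace R] : Prop :=
  ∀ U ∈ nhds (0 : R), ∃ I : Submodule Rᵐᵒᵖ R, IsOpen (I : Set R) ∧ (I : Set R) ⊆ U

/-- A right module over a topological ring is discrete if the annihilator of every
element is open. -/
def IsDiscreteModule (S : Type u) [Ring S] [TopologicalSpace S] (N : Type u)
    [AddCommGroup N] [Module Sᵐᵒᵖ N] : Prop :=
  ∀ y : N, IsOpen {s : S | op s • y = 0}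

/-- Let `R` and `S` be right linear topological rings and `f : R → S` a ring
homomorphism.  Then `f` is continuous if and only if every discrete right `S`-module
becomes, via restriction of scalars along `f`, a right `R`-module in which every
element has open annihilator. -/
theorem continuous_iff_discrete_restriction
    {R S : Type u} [Ring R] [Ring S] [TopologicalSpace R] [TopologicalSpace S]
    [IsTopologicalRing R] [IsTopologicalRing S]
    (hR : IsRightLinearTopology R) (hS : IsRightLinearTopology S) (f : R →+* S) :
    Continuous f ↔
      ∀ (N : Type u) [AddCommGroup N] [Module Sᵐᵒᵖ N], IsDiscreteModule S N →
        ∀ y : N, IsOpen {r : R | op (f r) • y = 0} := by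
  constructor
  · intro hf N _ _ hN y
    have : {r : R | op (f r) • y = 0} = f ⁻¹' {s : S | op s • y = 0} := rfl
    rw [this]
    exact (hN y).preimage hf
  · intro h
    have hcont : ContinuousAt f 0 := by
      intro U hU
      rw [Filter.mem_map]
      rw [map_zero] at hU
      obtain ⟨I, hIopen, hIsub⟩ := hS U hU
      -- The quotient S / I is a discrete right S-module
      have hdisc : IsDiscreteModule S (S ⧸ I) := by
        intro y
        obtain ⟨s, rfl⟩ := Submodule.Quotient.mk_surjective I y
        have : {t : S | op t • Submodule.Quotient.mk (p := I) s = 0}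
            = (fun t : S => s * t) ⁻¹' (I : Set S) := by
          ext t
          simp [← Submodule.Quotient.mk_smul, Submodule.Quotient.mk_eq_zero,
            MulOpposite.smul_eq_mul_unop]
        rw [this]
        exact hIopen.preimage (continuous_mul_left s)
      have hopen := h (S ⧸ I) hdisc (Submodule.Quotient.mk (1 : S))
      have heq : {r : R | op (f r) • Submodule.Quotient.mk (p := I) (1 : S) = 0}
          = f ⁻¹' (I : Set S) := by
        ext r
        simp [← Submodule.Quotient.mk_smul, Submodule.Quotient.mk_eq_zero,
          MulOpposite.smul_eq_mul_unop]
      rw [heq] at hopen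
      have hmem : (0 : R) ∈ f ⁻¹' (I : Set S) := by
        simp [SetLike.mem_coe]
      exact Filter.mem_of_superset (hopen.mem_nhds hmem) fun r hr => hIsub hr
    exact continuous_of_continuousAt_zero f.toAddMonoidHom hcont
end

section
/- Let R and S be right linear topological rings and f : R → S a ring homomorphism. If for every open right ideal I ⊆ R the closure of the right ideal f(I)·S in S is an open right ideal of S, then every separated topological right S-module which becomes a topological R-module when endowed with the discrete topology also becomes a topological S-module when endowed with the discrete topology. -/
universe u

open MulOpposite

/-- Continuity of a map `N × S → N` where `N` carries the discrete topology is
equivalent to openness of all the "fibers over singletons" in `S`. -/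
theorem discrete_continuous_iff {N S : Type u} [TopologicalSpace S] (g : N × S → N) :
    @Continuous (N × S) N (@instTopologicalSpaceProd N S ⊥ _) ⊥ g ↔
      ∀ n m : N, IsOpen {s : S | g (n, s) = m} := by
  letI : TopologicalSpace N := ⊥
  haveI : DiscreteTopology N := ⟨rfl⟩
  constructor
  · intro h n m
    have h1 : Continuous (fun s : S => g (n, s)) :=
      h.comp (continuous_const.prodMk continuous_id)
    exact (isOpen_discrete ({m} : Set N)).preimage h1
  · intro h
    rw [continuous_def]
    intro U _
    rw [isOpen_iff_mem_nhds]
    rintro ⟨n, s⟩ hns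
    refine Filter.mem_of_superset
      (((isOpen_discrete ({n} : Set N)).prod (h n (g (n, s)))).mem_nhds
        ⟨rfl, rfl⟩) ?_
    rintro ⟨a, b⟩ ⟨ha, hb⟩
    simp only [Set.mem_singleton_iff] at ha
    subst ha
    simp only [Set.mem_setOf_eq] at hb
    simpa [hb] using hns

/-- Main step with the separated topology as an honest instance. -/
theorem aux_open_fibers {R S : Type u} [Ring R] [Ring S] [TopologicalSpace R]
    [TopologicalSpace S] [IsTopologicalRing S]
    (hR : IsRightLinearTopology R) (f : R →+* S)
    (htaut : ∀ I : Submodule Rᵐᵒᵖ R, IsOpen (I : Set R) →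
      IsOpen (closure (Submodule.span Sᵐᵒᵖ (⇑f '' (I : Set R)) : Set S)))
    {N : Type u} [AddCommGroup N] [Module Sᵐᵒᵖ N] [TopologicalSpace N] [T2Space N]
    (hcontS : Continuous (fun p : N × S => op p.2 • p.1))
    (hdiscR : ∀ n m : N, IsOpen {r : R | op (f r) • n = m}) :
    ∀ n m : N, IsOpen {s : S | op s • n = m} := by
  intro n m
  -- the annihilator of `n` in `S` is a closed right ideal
  set Ann : Submodule Sᵐᵒᵖ S :=
    { carrier := {x : S | op x • n = 0}
      add_mem' := by
        intro a b ha hb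
        simp only [Set.mem_setOf_eq] at *
        rw [op_add, add_smul, ha, hb, add_zero]
      zero_mem' := by simp
      smul_mem' := by
        intro c x hx
        induction c using MulOpposite.rec' with
        | h t =>
          simp only [Set.mem_setOf_eq] at *
          have h1 : (op t : Sᵐᵒᵖ) • x = x * t := rfl
          rw [h1, op_mul, mul_smul, hx, smul_zero] } with hAnn
  have hAnnClosed : IsClosed (Ann : Set S) := by
    have hc : Continuous (fun x : S => op x • n) :=
      hcontS.comp (continuous_const.prodMk continuous_id)
    exact (isClosed_singleton (x := (0 : N))).preimage hc
  -- pick an open right ideal of `R` annihilating `n`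
  obtain ⟨I, hIopen, hIsub⟩ :=
    hR {r : R | op (f r) • n = 0} ((hdiscR n 0).mem_nhds (by simp))
  have hJopen : IsOpen (closure (Submodule.span Sᵐᵒᵖ (⇑f '' (I : Set R)) : Set S)) :=
    htaut I hIopen
  have hspan : Submodule.span Sᵐᵒᵖ (⇑f '' (I : Set R)) ≤ Ann := by
    rw [Submodule.span_le]
    rintro _ ⟨r, hr, rfl⟩
    exact hIsub hr
  have hJsub : closure (Submodule.span Sᵐᵒᵖ (⇑f '' (I : Set R)) : Set S) ⊆ (Ann : Set S) :=
    closure_minimal hspan hAnnClosed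
  have hJ0 : (0 : S) ∈ closure (Submodule.span Sᵐᵒᵖ (⇑f '' (I : Set R)) : Set S) :=
    subset_closure (Submodule.zero_mem _)
  rw [isOpen_iff_mem_nhds]
  intro s hs
  simp only [Set.mem_setOf_eq] at hs
  refine Filter.mem_of_superset
    (((isOpenMap_add_left s) _ hJopen).mem_nhds ⟨0, hJ0, add_zero s⟩) ?_
  rintro _ ⟨c, hc, rfl⟩
  have h0 : op c • n = 0 := hJsub hc
  show op (s + c) • n = m
  rw [op_add, add_smul, h0, add_zero, hs]

/-- Let `R` and `S` be right linear topological rings and `f : R → S` a ring map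
such that for every open right ideal `I ⊆ R` the closure of the right ideal
`f(I)·S` is an open right ideal of `S` (tautness).  Then every separated
topological right `S`-module which becomes a topological `R`-module when endowed
with the discrete topology also becomes a topological `S`-module when endowed
with the discrete topology. -/
theorem taut_discrete_R_module_is_discrete_S_module
    {R S : Type u} [Ring R] [Ring S] [TopologicalSpace R] [TopologicalSpace S]
    [IsTopologicalRing R] [IsTopologicalRing S]
    (hR : IsRightLinearTopology R) (hS : IsRightLinearTopology S) (f : R →+* S)
    (htaut : ∀ I : Submodule Rᵐᵒᵖ R, IsOpen (I : Set R) →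
      IsOpen (closure (Submodule.span Sᵐᵒᵖ (⇑f '' (I : Set R)) : Set S)))
    (N : Type u) [AddCommGroup N] [Module Sᵐᵒᵖ N] (τ : TopologicalSpace N)
    -- `N` is a separated topological right `S`-module:
    (hsep : @T2Space N τ)
    (hcontS : @Continuous (N × S) N (@instTopologicalSpaceProd N S τ _) τ
      (fun p => op p.2 • p.1))
    -- endowed with the discrete topology, `N` is a topological right `R`-module:
    (hdiscR : @Continuous (N × R) N (@instTopologicalSpaceProd N R ⊥ _) ⊥
      (fun p => op (f p.2) • p.1)) :
    -- endowed with the discrete topology, `N` is a topological right `S`-module: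
    @Continuous (N × S) N (@instTopologicalSpaceProd N S ⊥ _) ⊥
      (fun p => op p.2 • p.1) := by
  refine (discrete_continuous_iff (fun p : N × S => op p.2 • p.1)).mpr ?_
  have hdisc' : ∀ n m : N, IsOpen {r : R | op (f r) • n = m} :=
    (discrete_continuous_iff (fun p : N × R => op (f p.2) • p.1)).mp hdiscR
  haveI : T2Space N := hsep
  exact aux_open_fibers hR f htaut (N := N) hcontS hdisc'
end

section
/- Let R and S be right linear topological rings and f : R → S a continuous ring homomorphism that is taut (for every open right ideal I ⊆ R, the closure J of f(I)·S in S is an open right ideal of S). Then the collection of such closures J, as I ranges over all open right ideals of R, forms a base of neighborhoods of zero in S. -/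
universe u

open MulOpposite

/-- Let `f : R → S` be a continuous taut homomorphism of right linear topological
rings (taut: for every open right ideal `I ⊆ R` the closure `J` of `f(I)·S` is an
open right ideal of `S`).  Then the closures `J`, for `I` ranging over the open
right ideals of `R`, form a base of neighborhoods of zero in `S`. -/
theorem taut_closures_form_base
    {R S : Type u} [Ring R] [Ring S] [TopologicalSpace R] [TopologicalSpace S]
    [IsTopologicalRing R] [IsTopologicalRing S]
    (hR : IsRightLinearTopology R) (hS : IsRightLinearTopology S) (f : R →+* S)
    (hcont : Continuous f)
    (htaut : ∀ I : Submodule Rᵐᵒᵖ R, IsOpen (I : Set R) →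
      IsOpen (closure (Submodule.span Sᵐᵒᵖ (⇑f '' (I : Set R)) : Set S))) :
    ∀ V ∈ nhds (0 : S), ∃ I : Submodule Rᵐᵒᵖ R, IsOpen (I : Set R) ∧
      closure (Submodule.span Sᵐᵒᵖ (⇑f '' (I : Set R)) : Set S) ⊆ V := by
  intro V hV
  obtain ⟨J, hJopen, hJV⟩ := hS V hV
  have hJ0 : (0 : S) ∈ J := J.zero_mem
  have hpre : (⇑f ⁻¹' J) ∈ nhds (0 : R) := by
    have : (J : Set S) ∈ nhds (0 : S) := hJopen.mem_nhds hJ0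
    simpa [map_zero] using hcont.continuousAt.preimage_mem_nhds (by simpa [map_zero] using this)
  obtain ⟨I, hIopen, hIJ⟩ := hR _ hpre
  refine ⟨I, hIopen, ?_⟩
  have hspan : (Submodule.span Sᵐᵒᵖ (⇑f '' (I : Set R)) : Set S) ⊆ J := by
    exact Submodule.span_le.mpr (Set.image_subset_iff.mpr hIJ)
  have hJclosed : IsClosed (J : Set S) := by
    have : IsClosed ((J.toAddSubgroup : AddSubgroup S) : Set S) :=
      AddSubgroup.isClosed_of_isOpen _ hJopen
    simpa using this
  calc closure (Submodule.span Sᵐᵒᵖ (⇑f '' (I : Set R)) : Set S)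
      ⊆ closure (J : Set S) := closure_mono hspan
    _ = (J : Set S) := hJclosed.closure_eq
    _ ⊆ V := hJV
end

section
/- Let R and S be right linear topological rings, f : R → S a ring homomorphism, and let I'' ⊆ I' ⊆ R be open two-sided ideals of R such that the closure J' of f(I')·S and the closure J'' of f(I'')·S are both open two-sided ideals of S. Set R' = R/I', R'' = R/I'', S' = S/J', S'' = S/J''. Then the induced map R' ⊗_{R''} S'' → S' (of R'-S''-bimodules) is an isomorphism. -/
universe u

open MulOpposite

/-- `μ : X → Y → Z` exhibits `Z` as the tensor product `X ⊗_A Y` of the right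
`A`-module `X` and the left `A`-module `Y` over a (possibly noncommutative) ring
`A`: `μ` is biadditive, `A`-balanced, and universal among such pairings.  In
particular, for a biadditive balanced pairing `μ`, `IsTensorProd A μ` says exactly
that the induced additive map `X ⊗_A Y → Z` is an isomorphism. -/
def IsTensorProd (A : Type u) [Ring A] {X Y Z : Type u} [AddCommGroup X] [AddCommGroup Y]
    [AddCommGroup Z] [Module Aᵐᵒᵖ X] [Module A Y] (μ : X → Y → Z) : Prop :=
  (∀ x₁ x₂ y, μ (x₁ + x₂) y = μ x₁ y + μ x₂ y) ∧
  (∀ x y₁ y₂, μ x (y₁ + y₂) = μ x y₁ + μ x y₂) ∧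
  (∀ (x : X) (a : A) (y : Y), μ (MulOpposite.op a • x) y = μ x (a • y)) ∧
  ∀ (W : Type u) [AddCommGroup W] (β : X → Y → W),
    (∀ x₁ x₂ y, β (x₁ + x₂) y = β x₁ y + β x₂ y) →
    (∀ x y₁ y₂, β x (y₁ + y₂) = β x y₁ + β x y₂) →
    (∀ (x : X) (a : A) (y : Y), β (MulOpposite.op a • x) y = β x (a • y)) →
    ∃! ψ : Z →+ W, ∀ x y, ψ (μ x y) = β x y

/-- Let `f : R → S` be a map of right linear topological rings, `I'' ⊆ I' ⊆ R`
open two-sided ideals such that the closures `J'` of `f(I')·S` and `J''` of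
`f(I'')·S` are open two-sided ideals of `S`.  With `R' = R/I'`, `R'' = R/I''`,
`S' = S/J'`, `S'' = S/J''` (presented by surjective ring homomorphisms with the
prescribed kernels) and the induced maps `π : R'' → R'`, `σ : S'' → S'`,
`f' : R' → S'`, `f'' : R'' → S''`, the induced map `R' ⊗_{R''} S'' → S'`,
`a ⊗ b ↦ f'(a)·σ(b)`, is an isomorphism. -/
theorem quotients_tensor_iso
    {R S : Type u} [Ring R] [Ring S] [TopologicalSpace R] [TopologicalSpace S]
    [IsTopologicalRing R] [IsTopologicalRing S] (f : R →+* S)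
    (R' R'' S' S'' : Type u) [Ring R'] [Ring R''] [Ring S'] [Ring S'']
    (p' : R →+* R') (p'' : R →+* R'') (q' : S →+* S') (q'' : S →+* S'')
    (hp' : Function.Surjective p') (hp'' : Function.Surjective p'')
    (hq' : Function.Surjective q') (hq'' : Function.Surjective q'')
    (hI'open : IsOpen (⇑p' ⁻¹' {0})) (hI''open : IsOpen (⇑p'' ⁻¹' {0}))
    (hII : (⇑p'' ⁻¹' {0} : Set R) ⊆ ⇑p' ⁻¹' {0})
    (hJ' : (⇑q' ⁻¹' {0} : Set S)
      = closure (Submodule.span Sᵐᵒᵖ (⇑f '' (⇑p' ⁻¹' {0})) : Set S))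
    (hJ'' : (⇑q'' ⁻¹' {0} : Set S)
      = closure (Submodule.span Sᵐᵒᵖ (⇑f '' (⇑p'' ⁻¹' {0})) : Set S))
    (hJ'open : IsOpen (⇑q' ⁻¹' {0} : Set S)) (hJ''open : IsOpen (⇑q'' ⁻¹' {0} : Set S))
    (π : R'' →+* R') (hπ : π.comp p'' = p')
    (σ : S'' →+* S') (hσ : σ.comp q'' = q')
    (f' : R' →+* S') (hf' : f'.comp p' = q'.comp f)
    (f'' : R'' →+* S'') (hf'' : f''.comp p'' = q''.comp f) :
    letI : Module R'' S'' := Module.compHom S'' f''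
    letI : Module R''ᵐᵒᵖ R' := Module.compHom R' (RingHom.op π)
    IsTensorProd R'' (fun (a : R') (b : S'') => f' a * σ b) := by
  letI : Module R'' S'' := Module.compHom S'' f''
  letI : Module R''ᵐᵒᵖ R' := Module.compHom R' (RingHom.op π)
  have hsmulS : ∀ (c : R'') (y : S''), c • y = f'' c * y := fun c y => rfl
  have hsmulR : ∀ (c : R'') (x : R'), (op c • x : R') = x * π c := fun c x => rfl
  have hπx : ∀ r, π (p'' r) = p' r := fun r => RingHom.congr_fun hπ r
  have hf'x : ∀ r, f' (p' r) = q' (f r) := fun r => RingHom.congr_fun hf' r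
  have hf''x : ∀ r, f'' (p'' r) = q'' (f r) := fun r => RingHom.congr_fun hf'' r
  have hσx : ∀ s, σ (q'' s) = q' s := fun s => RingHom.congr_fun hσ s
  refine ⟨fun x₁ x₂ y => by
      show f' (x₁ + x₂) * σ y = f' x₁ * σ y + f' x₂ * σ y
      rw [map_add, add_mul],
    fun x y₁ y₂ => by
      show f' x * σ (y₁ + y₂) = f' x * σ y₁ + f' x * σ y₂
      rw [map_add, mul_add],
    fun x c y => by
      show f' (op c • x) * σ y = f' x * σ (c • y)
      obtain ⟨r, rfl⟩ := hp'' c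
      rw [hsmulR, hsmulS, map_mul, map_mul, hπx, hf'x, hf''x, hσx, mul_assoc], ?_⟩
  intro W _ β hadd1 hadd2 hbal
  have hβ0l : ∀ y, β 0 y = 0 := by
    intro y
    have h := hadd1 0 0 y
    rw [add_zero] at h
    exact (add_eq_right.mp h.symm)
  have hβ0r : ∀ x, β x 0 = 0 := by
    intro x
    have h := hadd2 x 0 0
    rw [add_zero] at h
    exact (add_eq_right.mp h.symm)
  -- the additive map `S →+ W`, `s ↦ β 1 (q'' s)`
  set g0 : S →+ W := AddMonoidHom.mk' (fun s => β 1 (q'' s))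
    (fun a b => by simp only [map_add]; rw [hadd2]) with hg0def
  have hg0 : ∀ s : S, g0 s = β 1 (q'' s) := fun s => rfl
  set M : Submodule Sᵐᵒᵖ S := Submodule.span Sᵐᵒᵖ (⇑f '' (⇑p' ⁻¹' {0})) with hMdef
  -- key computation on generators
  have hgen : ∀ (r : R) (t : S), g0 (f r * t) = β (p' r) (q'' t) := by
    intro r t
    rw [hg0, map_mul, ← hf''x r, ← hsmulS, ← hbal, hsmulR, one_mul, hπx]
  -- g0 kills products of span elements with anything
  have hMmul : ∀ s ∈ M, ∀ t : S, g0 (s * t) = 0 := by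
    intro s hs
    induction hs using Submodule.span_induction with
    | mem s hs =>
        obtain ⟨x, hx, rfl⟩ := hs
        intro t
        rw [hgen, Set.mem_preimage, Set.mem_singleton_iff] at *
        rw [hx, hβ0l]
    | zero => intro t; rw [zero_mul, map_zero]
    | add s t _ _ ihs iht =>
        intro u
        rw [add_mul, map_add, ihs, iht, add_zero]
    | smul a s _ ih =>
        intro t
        rw [MulOpposite.smul_eq_mul_unop, mul_assoc]
        exact ih _
  have hM : ∀ s ∈ M, g0 s = 0 := by
    intro s hs
    have h := hMmul s hs 1
    rwa [mul_one] at h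
  -- the open (hence closed) subgroup `M + ker q''`
  set K : AddSubgroup S := M.toAddSubgroup ⊔ AddMonoidHom.ker (q'' : S →+ S'') with hKdef
  have hkerq''sub : (⇑q'' ⁻¹' {0} : Set S) = (AddMonoidHom.ker (q'' : S →+ S'') : Set S) := by
    ext s
    simp [AddMonoidHom.mem_ker]
  have hKopen : IsOpen (K : Set S) := by
    refine AddSubgroup.isOpen_of_mem_nhds K (g := 0) ?_
    have h1 : ((AddMonoidHom.ker (q'' : S →+ S'') : Set S)) ∈ nhds (0 : S) := by
      rw [← hkerq''sub]
      exact hJ''open.mem_nhds (by simp)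
    exact Filter.mem_of_superset h1 (fun s hs => AddSubgroup.mem_sup_right hs)
  have hKclosed : IsClosed (K : Set S) := AddSubgroup.isClosed_of_isOpen K hKopen
  have hclosM : closure (M : Set S) ⊆ (K : Set S) := by
    refine closure_minimal ?_ hKclosed
    intro s hs
    exact AddSubgroup.mem_sup_left hs
  -- g0 vanishes on K
  have hKker : ∀ s ∈ K, g0 s = 0 := by
    have : K ≤ g0.ker := by
      rw [hKdef]
      refine sup_le ?_ ?_
      · intro s hs
        exact hM s hs
      · intro s hs
        have h0 : q'' s = 0 := hs
        rw [AddMonoidHom.mem_ker, hg0, h0, hβ0r]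
    exact fun s hs => this hs
  have hvanish : ∀ s : S, q' s = 0 → g0 s = 0 := by
    intro s hs
    have : s ∈ (⇑q' ⁻¹' {0} : Set S) := hs
    rw [hJ'] at this
    exact hKker s (hclosM this)
  have hcong : ∀ s t : S, q' s = q' t → g0 s = g0 t := by
    intro s t h
    have h0 : q' (s - t) = 0 := by rw [map_sub, h, sub_self]
    have := hvanish _ h0
    rw [map_sub, sub_eq_zero] at this
    exact this
  -- a set-theoretic section of q'
  set sec : S' → S := fun s' => (hq' s').choose with hsecdef
  have hsec : ∀ s', q' (sec s') = s' := fun s' => (hq' s').choose_spec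
  set ψ : S' →+ W := AddMonoidHom.mk' (fun s' => g0 (sec s'))
    (fun a b => by
      have h : q' (sec (a + b)) = q' (sec a + sec b) := by
        rw [map_add, hsec, hsec, hsec]
      show g0 (sec (a + b)) = g0 (sec a) + g0 (sec b)
      rw [hcong _ _ h, map_add]) with hψdef
  have hψap : ∀ s : S, ψ (q' s) = g0 s := fun s => hcong _ _ (hsec (q' s))
  have hprop : ∀ (x : R') (y : S''), ψ (f' x * σ y) = β x y := by
    intro x y
    obtain ⟨r, rfl⟩ := hp' x
    obtain ⟨s, rfl⟩ := hq'' y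
    have e : f' (p' r) * σ (q'' s) = q' (f r * s) := by
      rw [hf'x, hσx, map_mul]
    rw [e, hψap, hgen]
  refine ⟨ψ, hprop, ?_⟩
  intro ψ₂ h₂
  ext s'
  obtain ⟨s, rfl⟩ := hq' s'
  have e : q' s = f' 1 * σ (q'' s) := by
    rw [map_one, one_mul, hσx]
  rw [e, h₂ 1 (q'' s), hprop 1 (q'' s)]
end

section
/- Let R and S be two-sided linear topological rings whose topologies have bases of open two-sided ideals, and let f : R → S be a ring homomorphism. Suppose given descending chains of open two-sided ideals I_1 ⊇ I_2 ⊇ ⋯ in R and J_1 ⊇ J_2 ⊇ ⋯ in S, each forming a base of neighborhoods of zero, with f(I_n) ⊆ J_n, and such that for each n ≥ 1 the induced map R_n ⊗_{R_{n+1}} S_{n+1} → S_n is an isomorphism, where R_n = R/I_n and S_n = S/J_n. Then for each n, J_n equals the closure of the right ideal f(I_n)·S in S. -/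
universe u

open MulOpposite

/-- Let `f : R → S` be a map of two-sided linear topological rings equipped with
descending chains of open two-sided ideals `I_n ⊆ R`, `J_n ⊆ S` forming bases of
neighborhoods of zero, with `f(I_n) ⊆ J_n` (the ideals are presented as the
kernels of surjective ring maps `R → R_n`, `S → S_n` onto the quotient rings,
with transition maps `R_{n+1} → R_n`, `S_{n+1} → S_n` and induced maps
`f_n : R_n → S_n`).  If for every `n` the induced map
`R_n ⊗_{R_{n+1}} S_{n+1} → S_n`, `a ⊗ b ↦ f_n(a)·π_n(b)`, is an isomorphism,
then `J_n` is the closure of the right ideal `f(I_n)·S` in `S` for every `n`. -/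
theorem chains_tensor_iso_closure
    {R S : Type u} [Ring R] [Ring S] [TopologicalSpace R] [TopologicalSpace S]
    [IsTopologicalRing R] [IsTopologicalRing S] (f : R →+* S)
    (Rq Sq : ℕ → Type u) [∀ n, Ring (Rq n)] [∀ n, Ring (Sq n)]
    (pR : ∀ n, R →+* Rq n) (qS : ∀ n, S →+* Sq n)
    (hpR : ∀ n, Function.Surjective (pR n)) (hqS : ∀ n, Function.Surjective (qS n))
    (πR : ∀ n, Rq (n + 1) →+* Rq n) (πS : ∀ n, Sq (n + 1) →+* Sq n)
    (hπR : ∀ n, (πR n).comp (pR (n + 1)) = pR n)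
    (hπS : ∀ n, (πS n).comp (qS (n + 1)) = qS n)
    (fq : ∀ n, Rq n →+* Sq n)
    (hfq : ∀ n, (fq n).comp (pR n) = (qS n).comp f)
    -- the ideals `I_n = ker (R → R_n)` and `J_n = ker (S → S_n)` are open
    (hIopen : ∀ n, IsOpen (⇑(pR n) ⁻¹' {0})) (hJopen : ∀ n, IsOpen (⇑(qS n) ⁻¹' {0}))
    -- and form bases of neighborhoods of zero
    (hIbase : ∀ U ∈ nhds (0 : R), ∃ n, (⇑(pR n) ⁻¹' {0} : Set R) ⊆ U)
    (hJbase : ∀ V ∈ nhds (0 : S), ∃ n, (⇑(qS n) ⁻¹' {0} : Set S) ⊆ V)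
    -- `f(I_n) ⊆ J_n`
    (hfIJ : ∀ n, ⇑f '' (⇑(pR n) ⁻¹' {0}) ⊆ ⇑(qS n) ⁻¹' {0})
    -- the induced maps `R_n ⊗_{R_{n+1}} S_{n+1} → S_n` are isomorphisms
    (htens : ∀ n,
      letI : Module (Rq (n + 1)) (Sq (n + 1)) := Module.compHom _ (fq (n + 1))
      letI : Module (Rq (n + 1))ᵐᵒᵖ (Rq n) := Module.compHom _ (RingHom.op (πR n))
      IsTensorProd (Rq (n + 1)) (fun (a : Rq n) (b : Sq (n + 1)) => fq n a * πS n b)) :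
    ∀ n, (⇑(qS n) ⁻¹' {0} : Set S)
      = closure (Submodule.span Sᵐᵒᵖ (⇑f '' (⇑(pR n) ⁻¹' {0})) : Set S) := by
  -- surjectivity of transition maps
  have hπRs : ∀ n, Function.Surjective (πR n) := by
    intro n a
    obtain ⟨r, hr⟩ := hpR n a
    exact ⟨pR (n + 1) r, by rw [← RingHom.comp_apply, hπR n, hr]⟩
  -- commutation `fq n ∘ πR n = πS n ∘ fq (n+1)`
  have hcomm : ∀ n (k : Rq (n + 1)), fq n (πR n k) = πS n (fq (n + 1) k) := by
    intro n k
    obtain ⟨r, rfl⟩ := hpR (n + 1) k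
    have h1 : πR n (pR (n + 1) r) = pR n r := RingHom.congr_fun (hπR n) r
    have h2 : fq (n + 1) (pR (n + 1) r) = qS (n + 1) (f r) := RingHom.congr_fun (hfq (n + 1)) r
    have h3 : fq n (pR n r) = qS n (f r) := RingHom.congr_fun (hfq n) r
    have h4 : πS n (qS (n + 1) (f r)) = qS n (f r) := RingHom.congr_fun (hπS n) (f r)
    rw [h1, h2, h3, h4]
  -- monotonicity of the ideals
  have hImono : ∀ n, (⇑(pR (n + 1)) ⁻¹' {0} : Set R) ⊆ ⇑(pR n) ⁻¹' {0} := by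
    intro n r hr
    have : pR n r = πR n (pR (n + 1) r) := (RingHom.congr_fun (hπR n) r).symm
    simp only [Set.mem_preimage, Set.mem_singleton_iff] at hr ⊢
    rw [this, hr, map_zero]
  have hImono' : ∀ n m, n ≤ m → (⇑(pR m) ⁻¹' {0} : Set R) ⊆ ⇑(pR n) ⁻¹' {0} := by
    intro n m h
    induction h with
    | refl => exact le_refl _
    | step _ ih => exact le_trans (hImono _) ih
  have hJmono1 : ∀ k, (⇑(qS (k + 1)) ⁻¹' {0} : Set S) ⊆ ⇑(qS k) ⁻¹' {0} := by
    intro k s hs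
    have : qS k s = πS k (qS (k + 1) s) := (RingHom.congr_fun (hπS k) s).symm
    simp only [Set.mem_preimage, Set.mem_singleton_iff] at hs ⊢
    rw [this, hs, map_zero]
  have hJmono : ∀ n m, n ≤ m → (⇑(qS m) ⁻¹' {0} : Set S) ⊆ ⇑(qS n) ⁻¹' {0} := by
    intro n m h
    induction h with
    | refl => exact le_refl _
    | step _ ih => exact le_trans (hJmono1 _) ih
  -- the key single-step lemma
  have step : ∀ n (x : S), qS n x = 0 →
      ∃ y ∈ Submodule.span Sᵐᵒᵖ (⇑f '' (⇑(pR n) ⁻¹' {0})), qS (n + 1) (x - y) = 0 := by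
    intro n x hx
    letI : Module (Rq (n + 1)) (Sq (n + 1)) := Module.compHom _ (fq (n + 1))
    letI : Module (Rq (n + 1))ᵐᵒᵖ (Rq n) := Module.compHom _ (RingHom.op (πR n))
    obtain ⟨-, -, -, huniv⟩ := htens n
    set Jspan : Submodule Sᵐᵒᵖ S := Submodule.span Sᵐᵒᵖ (⇑f '' (⇑(pR n) ⁻¹' {0})) with hJspan
    set T : AddSubgroup (Sq (n + 1)) :=
      AddSubgroup.map (qS (n + 1)).toAddMonoidHom Jspan.toAddSubgroup with hT
    have hgen : ∀ (k : Rq (n + 1)) (b : Sq (n + 1)), πR n k = 0 → fq (n + 1) k * b ∈ T := by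
      intro k b hk
      obtain ⟨a, rfl⟩ := hpR (n + 1) k
      obtain ⟨s, rfl⟩ := hqS (n + 1) b
      have ha : pR n a = 0 := by
        rw [← RingHom.congr_fun (hπR n) a]; exact hk
      have hmem : f a * s ∈ Jspan := by
        have : f a ∈ Jspan := Submodule.subset_span ⟨a, by simp [ha], rfl⟩
        simpa [op_smul_eq_mul] using Jspan.smul_mem (op s) this
      refine ⟨f a * s, hmem, ?_⟩
      have h2 : fq (n + 1) (pR (n + 1) a) = qS (n + 1) (f a) := RingHom.congr_fun (hfq (n + 1)) a
      simp [h2]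
    choose L hL using hπRs n
    set mk : Sq (n + 1) →+ Sq (n + 1) ⧸ T := QuotientAddGroup.mk' T with hmkdef
    have hmk0 : ∀ (k : Rq (n + 1)) (b : Sq (n + 1)), πR n k = 0 → mk (fq (n + 1) k * b) = 0 := by
      intro k b hk
      exact (QuotientAddGroup.eq_zero_iff _).2 (hgen k b hk)
    have hmk2 : ∀ (k₁ k₂ : Rq (n + 1)) (b : Sq (n + 1)), πR n k₁ = πR n k₂ →
        mk (fq (n + 1) k₁ * b) = mk (fq (n + 1) k₂ * b) := by
      intro k₁ k₂ b h
      have h0 : mk (fq (n + 1) (k₁ - k₂) * b) = 0 := hmk0 _ _ (by rw [map_sub, h, sub_self])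
      rw [map_sub, sub_mul, map_sub, sub_eq_zero] at h0
      exact h0
    set β : Rq n → Sq (n + 1) → Sq (n + 1) ⧸ T :=
      fun a b => mk (fq (n + 1) (L a) * b) with hβdef
    have hβ1 : ∀ a₁ a₂ b, β (a₁ + a₂) b = β a₁ b + β a₂ b := by
      intro a₁ a₂ b
      have := hmk2 (L (a₁ + a₂)) (L a₁ + L a₂) b (by rw [hL, map_add, hL, hL])
      simp only [hβdef]
      rw [this, map_add, add_mul, map_add]
    have hβ2 : ∀ a b₁ b₂, β a (b₁ + b₂) = β a b₁ + β a b₂ := by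
      intro a b₁ b₂
      simp only [hβdef, mul_add, map_add]
    have hβ3 : ∀ (a : Rq n) (c : Rq (n + 1)) (b : Sq (n + 1)),
        β (MulOpposite.op c • a) b = β a (c • b) := by
      intro a c b
      have hsm1 : (MulOpposite.op c • a : Rq n) = a * πR n c := rfl
      have hsm2 : (c • b : Sq (n + 1)) = fq (n + 1) c * b := rfl
      simp only [hβdef, hsm1, hsm2]
      have := hmk2 (L (a * πR n c)) (L a * c) b (by rw [hL, map_mul, hL])
      rw [this, map_mul (fq (n + 1)) (L a) c, mul_assoc]
    obtain ⟨ψ, hψ, -⟩ := huniv (Sq (n + 1) ⧸ T) β hβ1 hβ2 hβ3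
    have key : mk (qS (n + 1) x) = 0 := by
      have hl : πS n (qS (n + 1) x) = 0 := by
        have h := RingHom.congr_fun (hπS n) x
        rw [RingHom.comp_apply] at h
        rw [h, hx]
      have h1 := hψ 1 (qS (n + 1) x)
      simp only [hβdef, map_one, one_mul, hl, map_zero] at h1
      have h2 := hmk2 (L 1) 1 (qS (n + 1) x) (by rw [hL, map_one])
      rw [map_one, one_mul] at h2
      rw [← h2, ← h1]
    have hxT : qS (n + 1) x ∈ T := (QuotientAddGroup.eq_zero_iff _).1 key
    obtain ⟨y, hy, hyx⟩ := hxT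
    refine ⟨y, hy, ?_⟩
    have hyx' : qS (n + 1) y = qS (n + 1) x := hyx
    rw [map_sub, hyx', sub_self]
  -- iterate the step
  have iter : ∀ n m (x : S), qS n x = 0 →
      ∃ y ∈ Submodule.span Sᵐᵒᵖ (⇑f '' (⇑(pR n) ⁻¹' {0})), qS (n + m) (x - y) = 0 := by
    intro n m
    induction m with
    | zero => exact fun x hx => ⟨0, Submodule.zero_mem _, by simpa using hx⟩
    | succ m ih =>
      intro x hx
      obtain ⟨y, hy, hxy⟩ := ih x hx
      obtain ⟨y', hy', hxy'⟩ := step (n + m) (x - y) hxy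
      have hy'' : y' ∈ Submodule.span Sᵐᵒᵖ (⇑f '' (⇑(pR n) ⁻¹' {0})) := by
        refine Submodule.span_mono ?_ hy'
        exact Set.image_mono (hImono' n (n + m) (Nat.le_add_right n m))
      refine ⟨y + y', Submodule.add_mem _ hy hy'', ?_⟩
      rw [sub_add_eq_sub_sub]
      exact hxy'
  intro n
  -- `J_n` as a right submodule
  set Jop : Submodule Sᵐᵒᵖ S :=
    { carrier := ⇑(qS n) ⁻¹' {0}
      add_mem' := by
        intro a b ha hb
        simp only [Set.mem_preimage, Set.mem_singleton_iff] at *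
        rw [map_add, ha, hb, add_zero]
      zero_mem' := by simp
      smul_mem' := by
        intro c x hx
        simp only [Set.mem_preimage, Set.mem_singleton_iff] at *
        have : (c • x : S) = x * c.unop := rfl
        rw [this, map_mul, hx, zero_mul] } with hJop
  ext x
  constructor
  · intro hx
    simp only [Set.mem_preimage, Set.mem_singleton_iff] at hx
    rw [mem_closure_iff_nhds]
    intro U hU
    have hV : (fun z : S => x - z) ⁻¹' U ∈ nhds (0 : S) := by
      refine ContinuousAt.preimage_mem_nhds ?_ (by simpa using hU)
      exact (continuous_const.sub continuous_id).continuousAt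
    obtain ⟨m, hm⟩ := hJbase _ hV
    obtain ⟨y, hy, hxy⟩ := iter n m x hx
    have hj : x - y ∈ (⇑(qS m) ⁻¹' {0} : Set S) :=
      hJmono m (n + m) (Nat.le_add_left m n) (by simpa using hxy)
    have : x - (x - y) ∈ U := hm hj
    rw [sub_sub_cancel] at this
    exact ⟨y, this, hy⟩
  · intro hx
    have hclosed : IsClosed (⇑(qS n) ⁻¹' {0} : Set S) := by
      have h := AddSubgroup.isClosed_of_isOpen Jop.toAddSubgroup (hJopen n)
      exact h
    have hsub : (Submodule.span Sᵐᵒᵖ (⇑f '' (⇑(pR n) ⁻¹' {0})) : Set S)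
        ⊆ (⇑(qS n) ⁻¹' {0} : Set S) := by
      have h : Submodule.span Sᵐᵒᵖ (⇑f '' (⇑(pR n) ⁻¹' {0})) ≤ Jop :=
        Submodule.span_le.2 (hfIJ n)
      exact h
    exact closure_minimal hsub hclosed hx
end

section
/- Let f : R → S be a continuous homomorphism of two-sided linear topological rings such that there exist bases of neighborhoods of zero {I_α} in R and {J_α} in S, consisting of open two-sided ideals indexed by the same directed poset, with f(I_α) ⊆ J_α, the induced quotient ring maps R/I_α → S/J_α being ring epimorphisms, and the families being decreasing along the poset order. Then for any open two-sided ideals I ⊆ R and J ⊆ S with f(I) ⊆ J, the induced map R/I → S/J is a ring epimorphism. -/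
universe u

/-- Let `f : R → S` be a continuous homomorphism of two-sided linear topological
rings, and suppose given bases of neighborhoods of zero consisting of open
two-sided ideals `I_α ⊆ R` and `J_α ⊆ S` indexed by the same directed poset
(the ideals being presented as kernels of surjective ring homomorphisms
`p_α : R → A_α` and `q_α : S → B_α` onto the quotient rings), decreasing along
the poset order, with `f(I_α) ⊆ J_α` and the induced quotient maps
`g_α : A_α = R/I_α → S/J_α = B_α` being ring epimorphisms.  Then for any open
two-sided ideals `I ⊆ R`, `J ⊆ S` with `f(I) ⊆ J` (again presented as kernels of
surjections `p : R → A'`, `q : S → B'`), the induced map `R/I → S/J` is a ring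
epimorphism. -/
theorem proepimorphism_of_directed_base
    {R S : Type u} [Ring R] [Ring S] [TopologicalSpace R] [TopologicalSpace S]
    [IsTopologicalRing R] [IsTopologicalRing S] (f : R →+* S) (hcont : Continuous f)
    (ι : Type u) [Preorder ι] (hdir : ∀ a b : ι, ∃ c, a ≤ c ∧ b ≤ c)
    (A B : ι → Type u) [∀ a, Ring (A a)] [∀ a, Ring (B a)]
    (p : ∀ a, R →+* A a) (q : ∀ a, S →+* B a)
    (hpsurj : ∀ a, Function.Surjective (p a)) (hqsurj : ∀ a, Function.Surjective (q a))
    (hIopen : ∀ a, IsOpen (⇑(p a) ⁻¹' {0})) (hJopen : ∀ a, IsOpen (⇑(q a) ⁻¹' {0}))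
    (hIbase : ∀ U ∈ nhds (0 : R), ∃ a, (⇑(p a) ⁻¹' {0} : Set R) ⊆ U)
    (hJbase : ∀ V ∈ nhds (0 : S), ∃ a, (⇑(q a) ⁻¹' {0} : Set S) ⊆ V)
    (hImono : ∀ a b : ι, a ≤ b → (⇑(p b) ⁻¹' {0} : Set R) ⊆ ⇑(p a) ⁻¹' {0})
    (hJmono : ∀ a b : ι, a ≤ b → (⇑(q b) ⁻¹' {0} : Set S) ⊆ ⇑(q a) ⁻¹' {0})
    (hfIJ : ∀ a, ⇑f '' (⇑(p a) ⁻¹' {0}) ⊆ ⇑(q a) ⁻¹' {0})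
    (g : ∀ a, A a →+* B a) (hg : ∀ a, (g a).comp (p a) = (q a).comp f)
    (hgepi : ∀ a, (g a).IsRingEpi) :
    ∀ (A' B' : Type u) [Ring A'] [Ring B'] (p' : R →+* A') (q' : S →+* B'),
      Function.Surjective p' → Function.Surjective q' →
      IsOpen (⇑p' ⁻¹' {0}) → IsOpen (⇑q' ⁻¹' {0}) →
      ⇑f '' (⇑p' ⁻¹' {0}) ⊆ ⇑q' ⁻¹' {0} →
      ∀ g' : A' →+* B', g'.comp p' = q'.comp f → g'.IsRingEpi := by
  intro A' B' _ _ p' q' hp' hq' hIop hJop hf' g' hg' T _ u v huv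
  have h0p : (0 : R) ∈ ⇑p' ⁻¹' {0} := by simp
  have h0q : (0 : S) ∈ ⇑q' ⁻¹' {0} := by simp
  obtain ⟨a, ha⟩ := hIbase _ (hIop.mem_nhds h0p)
  obtain ⟨b, hb⟩ := hJbase _ (hJop.mem_nhds h0q)
  obtain ⟨c, hac, hbc⟩ := hdir a b
  have hkp : RingHom.ker (p c) ≤ RingHom.ker p' := fun x hx => by
    have hx' : x ∈ (⇑(p c) ⁻¹' {0} : Set R) := by simpa [RingHom.mem_ker] using hx
    simpa [RingHom.mem_ker] using ha (hImono a c hac hx')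
  have hkq : RingHom.ker (q c) ≤ RingHom.ker q' := fun x hx => by
    have hx' : x ∈ (⇑(q c) ⁻¹' {0} : Set S) := by simpa [RingHom.mem_ker] using hx
    simpa [RingHom.mem_ker] using hb (hJmono b c hbc hx')
  let π : A c →+* A' := (p c).liftOfSurjective (hpsurj c) ⟨p', hkp⟩
  let ρ : B c →+* B' := (q c).liftOfSurjective (hqsurj c) ⟨q', hkq⟩
  have hπ : ∀ x, π ((p c) x) = p' x := fun x =>
    (p c).liftOfRightInverse_comp_apply _ _ ⟨p', hkp⟩ x
  have hρ : ∀ x, ρ ((q c) x) = q' x := fun x =>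
    (q c).liftOfRightInverse_comp_apply _ _ ⟨q', hkq⟩ x
  have key : u.comp ρ = v.comp ρ := by
    apply hgepi c T
    apply RingHom.ext
    intro y
    obtain ⟨x, rfl⟩ := hpsurj c y
    have h1 : (g c) ((p c) x) = (q c) (f x) := by
      simpa using RingHom.congr_fun (hg c) x
    have h2 : g' (p' x) = q' (f x) := by
      simpa using RingHom.congr_fun hg' x
    have h3 : u (g' (p' x)) = v (g' (p' x)) := by
      simpa using RingHom.congr_fun huv (p' x)
    simp only [RingHom.comp_apply, h1, hρ]
    rw [← h2, h3, h2]
  ext s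
  obtain ⟨y, rfl⟩ := hq' s
  rw [← hρ y]
  exact RingHom.congr_fun key ((q c) y)
end

section
/- Let R be a commutative integral domain with fraction field Q, let S be a commutative ring, and let f : R → S be a ring homomorphism that is an epimorphism in the category of commutative rings. Then the induced map Q → Q ⊗_R S is an epimorphism of commutative rings. Consequently, if f is injective and S is an integral domain (so Q ⊗_R S ≠ 0), the map Q → Q ⊗_R S is an isomorphism; hence every element s ∈ S satisfies: there exist p, q ∈ R with q ≠ 0 and f(q)·s = f(p). -/
set_option maxHeartbeats 1600000
set_option synthInstance.maxHeartbeats 400000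

universe u

open scoped TensorProduct

/-- `f` is an epimorphism in the category of commutative (unital) rings. -/
def IsCommRingEpi {R S : Type u} [CommRing R] [CommRing S] (f : R →+* S) : Prop :=
  ∀ (U : Type u) [CommRing U] (g h : S →+* U), g.comp f = h.comp f → g = h

/-- If `a ⊗ 1 = 1 ⊗ a` in `A ⊗[K] A` over a field `K`, then `a` comes from `K`. -/
lemma aux_tmul_comm_mem_range {K A : Type*} [Field K] [CommRing A] [Algebra K A]
    [Nontrivial A] (a : A) (h : (a ⊗ₜ[K] (1 : A) : A ⊗[K] A) = 1 ⊗ₜ[K] a) :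
    ∃ c : K, algebraMap K A c = a := by
  obtain ⟨φ, hφ⟩ := (Algebra.linearMap K A).exists_leftInverse_of_injective
    (by rw [LinearMap.ker_eq_bot]; exact (algebraMap K A).injective)
  have hφ1 : φ 1 = 1 := by
    have := LinearMap.congr_fun hφ 1
    simpa using this
  let T : A ⊗[K] A →ₗ[K] A :=
    (TensorProduct.lid K A).toLinearMap.comp (TensorProduct.map φ LinearMap.id)
  have h1 : T (a ⊗ₜ[K] (1 : A)) = φ a • 1 := by simp [T]
  have h2 : T ((1 : A) ⊗ₜ[K] a) = a := by simp [T, hφ1]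
  refine ⟨φ a, ?_⟩
  rw [Algebra.algebraMap_eq_smul_one, ← h1, h, h2]

/-- Let `R` be a commutative domain with fraction field `Q`, and let
`f : R → S` be an epimorphism of commutative rings.  Then the induced map
`Q → Q ⊗_R S` is an epimorphism of commutative rings; consequently, if `f` is
injective and `S` is a domain, then `Q → Q ⊗_R S` is an isomorphism, and every
`s ∈ S` satisfies: there exist `p, q ∈ R` with `q ≠ 0` and `f(q)·s = f(p)`. -/
theorem epi_pushout_to_fractionField
    (R S : Type u) [CommRing R] [IsDomain R] [CommRing S] (f : R →+* S)
    (hf : IsCommRingEpi f) :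
    letI : Algebra R S := f.toAlgebra
    IsCommRingEpi
        (Algebra.TensorProduct.includeLeftRingHom :
          FractionRing R →+* (FractionRing R) ⊗[R] S) ∧
      (Function.Injective f → IsDomain S →
        Function.Bijective
            (Algebra.TensorProduct.includeLeftRingHom :
              FractionRing R →+* (FractionRing R) ⊗[R] S) ∧
          ∀ s : S, ∃ p q : R, q ≠ 0 ∧ f q * s = f p) := by
  letI : Algebra R S := f.toAlgebra
  set Q := FractionRing R with hQ
  set e : Q →+* Q ⊗[R] S := Algebra.TensorProduct.includeLeftRingHom with he
  have hfS : ∀ r : R, r • (1 : S) = f r := by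
    intro r
    rw [← Algebra.algebraMap_eq_smul_one, RingHom.algebraMap_toAlgebra]
  have key : ∀ r : R, ((1 : Q) ⊗ₜ[R] (f r) : Q ⊗[R] S) = e (algebraMap R Q r) := by
    intro r
    rw [he, Algebra.TensorProduct.includeLeftRingHom_apply,
      Algebra.algebraMap_eq_smul_one (A := Q) r, TensorProduct.smul_tmul, hfS]
  have epi : IsCommRingEpi e := by
    intro U _ g h hgh
    have hright : g.comp (Algebra.TensorProduct.includeRight.toRingHom : S →+* Q ⊗[R] S)
        = h.comp (Algebra.TensorProduct.includeRight.toRingHom : S →+* Q ⊗[R] S) := by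
      apply hf
      ext r
      simp only [RingHom.comp_apply, AlgHom.toRingHom_eq_coe, RingHom.coe_coe,
        Algebra.TensorProduct.includeRight_apply]
      rw [key r]
      exact RingHom.congr_fun hgh (algebraMap R Q r)
    refine RingHom.ext fun x => ?_
    induction x using TensorProduct.induction_on with
    | zero => simp
    | tmul q s =>
        have hx : (q ⊗ₜ[R] s : Q ⊗[R] S) = (q ⊗ₜ[R] (1 : S)) * ((1 : Q) ⊗ₜ[R] s) := by
          rw [Algebra.TensorProduct.tmul_mul_tmul, mul_one, one_mul]
        rw [hx, map_mul, map_mul]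
        have h1 : g (q ⊗ₜ[R] (1 : S)) = h (q ⊗ₜ[R] (1 : S)) := RingHom.congr_fun hgh q
        have h2 : g ((1 : Q) ⊗ₜ[R] s) = h ((1 : Q) ⊗ₜ[R] s) := by
          have := RingHom.congr_fun hright s
          simpa using this
        rw [h1, h2]
    | add x y hx hy => rw [map_add, map_add, hx, hy]
  refine ⟨epi, ?_⟩
  intro hinj hdom
  -- `S → Q ⊗[R] S` is a localized module, hence injective
  have hbc : IsBaseChange Q (TensorProduct.mk R Q S 1) := TensorProduct.isBaseChange R S Q
  have hlm : IsLocalizedModule (nonZeroDivisors R) (TensorProduct.mk R Q S 1) :=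
    (isLocalizedModule_iff_isBaseChange (nonZeroDivisors R) Q _).mpr hbc
  have hrinj : Function.Injective (fun s : S => ((1 : Q) ⊗ₜ[R] s : Q ⊗[R] S)) := by
    intro s₁ s₂ h12
    have hz : ((1 : Q) ⊗ₜ[R] (s₁ - s₂) : Q ⊗[R] S) = 0 := by
      have : TensorProduct.mk R Q S 1 (s₁ - s₂) = 0 := by
        rw [map_sub]
        simpa [TensorProduct.mk_apply] using sub_eq_zero_of_eq h12
      simpa [TensorProduct.mk_apply] using this
    obtain ⟨⟨c, hc⟩, hcs⟩ := (IsLocalizedModule.eq_zero_iff (nonZeroDivisors R)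
      (TensorProduct.mk R Q S 1)).mp (by simpa [TensorProduct.mk_apply] using hz)
    have hcs' : f c * (s₁ - s₂) = 0 := by
      have : c • (s₁ - s₂) = 0 := hcs
      rwa [Algebra.smul_def, RingHom.algebraMap_toAlgebra] at this
    have hc0 : f c ≠ 0 := by
      intro h0
      have : f c = f 0 := by simpa using h0
      exact (mem_nonZeroDivisors_iff_ne_zero.mp hc) (hinj this)
    have := (mul_eq_zero.mp hcs').resolve_left hc0
    exact sub_eq_zero.mp this
  have hnt : Nontrivial (Q ⊗[R] S) := by
    refine ⟨⟨1, 0, fun h01 => ?_⟩⟩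
    have : ((1 : Q) ⊗ₜ[R] (1 : S) : Q ⊗[R] S) = (1 : Q) ⊗ₜ[R] (0 : S) := by
      rw [TensorProduct.tmul_zero]
      simpa [Algebra.TensorProduct.one_def] using h01
    exact one_ne_zero (hrinj this)
  -- injectivity of `e`
  have einj : Function.Injective e := e.injective
  -- surjectivity of `e`
  have esurj : Function.Surjective e := by
    intro x
    have hcomp :
        (Algebra.TensorProduct.includeLeftRingHom :
            Q ⊗[R] S →+* (Q ⊗[R] S) ⊗[Q] (Q ⊗[R] S)).comp e
          = (Algebra.TensorProduct.includeRight.toRingHom :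
            Q ⊗[R] S →+* (Q ⊗[R] S) ⊗[Q] (Q ⊗[R] S)).comp e := by
      ext q
      simp only [RingHom.comp_apply, AlgHom.toRingHom_eq_coe, RingHom.coe_coe,
        Algebra.TensorProduct.includeLeftRingHom_apply,
        Algebra.TensorProduct.includeRight_apply]
      have hq : e q = algebraMap Q (Q ⊗[R] S) q := by
        rw [he, Algebra.TensorProduct.includeLeftRingHom_apply,
          Algebra.TensorProduct.algebraMap_apply, Algebra.algebraMap_self, RingHom.id_apply]
      rw [hq, Algebra.algebraMap_eq_smul_one (A := Q ⊗[R] S) q, TensorProduct.smul_tmul]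
    have := epi ((Q ⊗[R] S) ⊗[Q] (Q ⊗[R] S)) _ _ hcomp
    have hxx : (x ⊗ₜ[Q] (1 : Q ⊗[R] S) : (Q ⊗[R] S) ⊗[Q] (Q ⊗[R] S)) = 1 ⊗ₜ[Q] x := by
      have := RingHom.congr_fun this x
      simpa using this
    obtain ⟨c, hc⟩ := aux_tmul_comm_mem_range (K := Q) x hxx
    refine ⟨c, ?_⟩
    rw [he, Algebra.TensorProduct.includeLeftRingHom_apply, ← hc,
      Algebra.TensorProduct.algebraMap_apply, Algebra.algebraMap_self, RingHom.id_apply]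
  refine ⟨⟨einj, esurj⟩, ?_⟩
  intro s
  obtain ⟨q', hq'⟩ := esurj ((1 : Q) ⊗ₜ[R] s)
  obtain ⟨⟨p, q⟩, hpq⟩ := IsLocalization.surj (nonZeroDivisors R) q'
  refine ⟨p, q, mem_nonZeroDivisors_iff_ne_zero.mp q.2, ?_⟩
  have heq : e q' * e (algebraMap R Q q) = e (algebraMap R Q p) := by
    rw [← map_mul, hpq]
  rw [hq', ← key q, ← key p, Algebra.TensorProduct.tmul_mul_tmul, one_mul] at heq
  have := hrinj heq
  rw [mul_comm] at this
  exact this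
end

section
/- Let f : R → S be a continuous taut map of right linear topological rings, and let N be a discrete right S-module. Let I ⊆ R be an open right ideal such that the closure J of f(I)·S is an open right ideal of S. Then an element y ∈ N is annihilated by I (i.e., y·f(I) = 0) if and only if y is annihilated by J. -/
universe u

open MulOpposite

/-- Let `f : R → S` be a continuous taut map of right linear topological rings,
`N` a discrete right `S`-module, and `I ⊆ R` an open right ideal such that the
closure `J` of `f(I)·S` is an open right ideal of `S`.  Then `y ∈ N` is
annihilated by `I` (acting through `f`) if and only if it is annihilated by `J`. -/
theorem annihilated_by_I_iff_annihilated_by_closure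
    {R S : Type u} [Ring R] [Ring S] [TopologicalSpace R] [TopologicalSpace S]
    [IsTopologicalRing R] [IsTopologicalRing S]
    (hR : IsRightLinearTopology R) (hS : IsRightLinearTopology S) (f : R →+* S)
    (hcont : Continuous f)
    (htaut : ∀ I : Submodule Rᵐᵒᵖ R, IsOpen (I : Set R) →
      IsOpen (closure (Submodule.span Sᵐᵒᵖ (⇑f '' (I : Set R)) : Set S)))
    (N : Type u) [AddCommGroup N] [Module Sᵐᵒᵖ N] (hN : IsDiscreteModule S N)
    (I : Submodule Rᵐᵒᵖ R) (hIopen : IsOpen (I : Set R))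
    (hJopen : IsOpen (closure (Submodule.span Sᵐᵒᵖ (⇑f '' (I : Set R)) : Set S)))
    (y : N) :
    (∀ r ∈ I, op (f r) • y = 0) ↔
      (∀ s ∈ closure (Submodule.span Sᵐᵒᵖ (⇑f '' (I : Set R)) : Set S), op s • y = 0) := by
  constructor
  · intro h
    -- annihilator submodule
    set A : Submodule Sᵐᵒᵖ S :=
      { carrier := {s : S | op s • y = 0}
        add_mem' := by
          intro a b ha hb
          simp only [Set.mem_setOf_eq] at *
          rw [op_add, add_smul, ha, hb, add_zero]
        zero_mem' := by simp
        smul_mem' := by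
          intro c x hx
          simp only [Set.mem_setOf_eq] at *
          have : op (c • x) = c * op x := by
            induction c using MulOpposite.rec'
            simp [op_mul]
          rw [this, mul_smul, hx, smul_zero] } with hA
    have hspan : (Submodule.span Sᵐᵒᵖ (⇑f '' (I : Set R))) ≤ A := by
      apply Submodule.span_le.2
      rintro _ ⟨r, hr, rfl⟩
      exact h r hr
    have hAopen : IsOpen (A : Set S) := hN y
    have hAclosed : IsClosed (A : Set S) :=
      (A.toAddSubgroup).isClosed_of_isOpen hAopen
    intro s hs
    have := closure_minimal hspan hAclosed hs
    exact this
  · intro h r hr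
    exact h (f r) (subset_closure (Submodule.subset_span ⟨r, hr, rfl⟩))
end

section
/- Let f : R → S be a continuous homomorphism of two-sided linear topological rings such that the functor of restriction of scalars from discrete right S-modules to discrete right R-modules is fully faithful. Then for any open two-sided ideals I ⊆ R and J ⊆ S with f(I) ⊆ J, the induced ring map R/I → S/J is a ring epimorphism. -/
universe u

open MulOpposite

/-- A topological ring is two-sided linear if its open two-sided ideals form
a base of neighborhoods of zero. -/
def IsTwoSidedLinearTopology (R : Type u) [Ring R] [TopologicalSpace R] : Prop :=
  ∀ U ∈ nhds (0 : R), ∃ I : TwoSidedIdeal R, IsOpen (I : Set R) ∧ (I : Set R) ⊆ U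

/-- Let `f : R → S` be a continuous homomorphism of two-sided linear topological
rings such that restriction of scalars from discrete right `S`-modules to discrete
right `R`-modules is fully faithful (i.e., every additive `R`-linear map between
discrete right `S`-modules is `S`-linear).  Then for any open two-sided ideals
`I ⊆ R` and `J ⊆ S` with `f(I) ⊆ J` (presented as kernels of surjective ring maps
`p : R → A`, `q : S → B` onto the quotient rings), any induced ring map
`R/I → S/J` is a ring epimorphism. -/
theorem quotient_epi_of_fully_faithful_discrete_restriction
    {R S : Type u} [Ring R] [Ring S] [TopologicalSpace R] [TopologicalSpace S]
    [IsTopologicalRing R] [IsTopologicalRing S]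
    (hR : IsTwoSidedLinearTopology R) (hS : IsTwoSidedLinearTopology S)
    (f : R →+* S) (hcont : Continuous f)
    (hff : ∀ (M N : Type u) [AddCommGroup M] [AddCommGroup N]
      [Module Sᵐᵒᵖ M] [Module Sᵐᵒᵖ N], IsDiscreteModule S M → IsDiscreteModule S N →
      ∀ h : M →+ N, (∀ (x : M) (r : R), h (op (f r) • x) = op (f r) • h x) →
        ∀ (x : M) (s : S), h (op s • x) = op s • h x) :
    ∀ (A B : Type u) [Ring A] [Ring B] (p : R →+* A) (q : S →+* B),
      Function.Surjective p → Function.Surjective q →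
      IsOpen (⇑p ⁻¹' {0}) → IsOpen (⇑q ⁻¹' {0}) →
      ⇑f '' (⇑p ⁻¹' {0}) ⊆ ⇑q ⁻¹' {0} →
      ∀ g : A →+* B, g.comp p = q.comp f → g.IsRingEpi := by
  intro A B _ _ p q hpsurj hqsurj hpopen hqopen _ g hg T _ g₁ g₂ hg12
  -- preimages under q of arbitrary sets are open
  have hq' : ∀ V : Set B, IsOpen (⇑q ⁻¹' V) := by
    intro V
    rw [isOpen_iff_mem_nhds]
    intro s hs
    have hsub : (fun x => s + x) '' (⇑q ⁻¹' {0}) ⊆ ⇑q ⁻¹' V := by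
      rintro _ ⟨x, hx, rfl⟩
      simp only [Set.mem_preimage, Set.mem_singleton_iff] at hx
      simpa [Set.mem_preimage, map_add, hx] using hs
    refine Filter.mem_of_superset ?_ hsub
    have hopen := (Homeomorph.addLeft s).isOpenMap _ hqopen
    exact hopen.mem_nhds ⟨0, by simp, by simp⟩
  -- two right S-module structures on T
  let mod1 : Module Sᵐᵒᵖ T := Module.compHom T ((g₁.comp q).op)
  let mod2 : Module Sᵐᵒᵖ T := Module.compHom T ((g₂.comp q).op)
  have hsmul1 : ∀ (s : S) (t : T), @HSMul.hSMul _ _ _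
      (@instHSMul _ _ (@SMulZeroClass.toSMul _ _ _ (@SMulWithZero.toSMulZeroClass _ _ _ _
        (@MulActionWithZero.toSMulWithZero _ _ _ _ (@Module.toMulActionWithZero _ _ _ _ mod1)))))
      (op s) t = t * g₁ (q s) := fun _ _ => rfl
  have hsmul2 : ∀ (s : S) (t : T), @HSMul.hSMul _ _ _
      (@instHSMul _ _ (@SMulZeroClass.toSMul _ _ _ (@SMulWithZero.toSMulZeroClass _ _ _ _
        (@MulActionWithZero.toSMulWithZero _ _ _ _ (@Module.toMulActionWithZero _ _ _ _ mod2)))))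
      (op s) t = t * g₂ (q s) := fun _ _ => rfl
  have hd1 : @IsDiscreteModule S _ _ T _ mod1 := by
    intro y
    have : {s : S | @HSMul.hSMul _ _ _
        (@instHSMul _ _ (@SMulZeroClass.toSMul _ _ _ (@SMulWithZero.toSMulZeroClass _ _ _ _
          (@MulActionWithZero.toSMulWithZero _ _ _ _ (@Module.toMulActionWithZero _ _ _ _ mod1)))))
        (op s) y = 0} = ⇑q ⁻¹' {b : B | y * g₁ b = 0} := by
      ext s; simp [hsmul1]
    rw [this]; exact hq' _
  have hd2 : @IsDiscreteModule S _ _ T _ mod2 := by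
    intro y
    have : {s : S | @HSMul.hSMul _ _ _
        (@instHSMul _ _ (@SMulZeroClass.toSMul _ _ _ (@SMulWithZero.toSMulZeroClass _ _ _ _
          (@MulActionWithZero.toSMulWithZero _ _ _ _ (@Module.toMulActionWithZero _ _ _ _ mod2)))))
        (op s) y = 0} = ⇑q ⁻¹' {b : B | y * g₂ b = 0} := by
      ext s; simp [hsmul2]
    rw [this]; exact hq' _
  have hsemi : ∀ (x : T) (r : R), (AddMonoidHom.id T) (@HSMul.hSMul _ _ _
      (@instHSMul _ _ (@SMulZeroClass.toSMul _ _ _ (@SMulWithZero.toSMulZeroClass _ _ _ _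
        (@MulActionWithZero.toSMulWithZero _ _ _ _ (@Module.toMulActionWithZero _ _ _ _ mod1)))))
      (op (f r)) x) = @HSMul.hSMul _ _ _
      (@instHSMul _ _ (@SMulZeroClass.toSMul _ _ _ (@SMulWithZero.toSMulZeroClass _ _ _ _
        (@MulActionWithZero.toSMulWithZero _ _ _ _ (@Module.toMulActionWithZero _ _ _ _ mod2)))))
      (op (f r)) ((AddMonoidHom.id T) x) := by
    intro x r
    simp only [AddMonoidHom.id_apply, hsmul1, hsmul2]
    have h1 : q (f r) = g (p r) := (congrFun (congrArg DFunLike.coe hg.symm) r :)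
    have h2 : g₁ (g (p r)) = g₂ (g (p r)) := (congrFun (congrArg DFunLike.coe hg12) (p r) :)
    rw [h1, h2]
  have key := @hff T T _ _ mod1 mod2 hd1 hd2 (AddMonoidHom.id T) hsemi
  have key' : ∀ (s : S), g₁ (q s) = g₂ (q s) := by
    intro s
    have := key 1 s
    simpa [AddMonoidHom.id_apply, hsmul1, hsmul2] using this
  ext b
  obtain ⟨s, rfl⟩ := hqsurj b
  exact key' s
end

section
/- Let f : R → S be a strongly right taut continuous map of two-sided linear topological rings which is a topological ring proepimorphism. Then the restriction-of-scalars functor from discrete right S-modules to discrete right R-modules is fully faithful: any R-linear map h : M → N between discrete right S-modules is S-linear. -/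
universe u

open MulOpposite

/-- If a ring epimorphism `g : A →+* B` is given, any derivation-like map `d : B →+ P`
into a `(B,B)`-bimodule vanishing on the image of `g` vanishes. -/
theorem aux_epi_deriv_zero {A B P : Type u} [Ring A] [Ring B] [AddCommGroup P]
    [Module B P] [Module Bᵐᵒᵖ P] [SMulCommClass B Bᵐᵒᵖ P]
    (g : A →+* B) (hg : g.IsRingEpi) (d : B →+ P)
    (hd : ∀ b b' : B, d (b * b') = b • d b' + op b' • d b)
    (hgd : ∀ a, d (g a) = 0) : ∀ b, d b = 0 := by
  have hd1 : d 1 = 0 := by simpa using hgd 1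
  let v : B →+* TrivSqZeroExt B P :=
    { toFun := fun b => TrivSqZeroExt.inl b + TrivSqZeroExt.inr (d b)
      map_one' := by simp [hd1, TrivSqZeroExt.inl_one]
      map_mul' := fun b b' => by
        show TrivSqZeroExt.inl (b * b') + TrivSqZeroExt.inr (d (b * b')) =
          (TrivSqZeroExt.inl b + TrivSqZeroExt.inr (d b)) *
          (TrivSqZeroExt.inl b' + TrivSqZeroExt.inr (d b'))
        simp only [hd b b', mul_add, add_mul, TrivSqZeroExt.inl_mul_inl,
          TrivSqZeroExt.inl_mul_inr, TrivSqZeroExt.inr_mul_inl, TrivSqZeroExt.inr_mul_inr,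
          TrivSqZeroExt.inr_add, TrivSqZeroExt.inr_zero]
        abel
      map_zero' := by simp
      map_add' := fun b b' => by
        show TrivSqZeroExt.inl (b + b') + TrivSqZeroExt.inr (d (b + b')) = _
        simp [TrivSqZeroExt.inl_add]; abel }
  have key : TrivSqZeroExt.inlHom B P = v := by
    refine hg _ (TrivSqZeroExt.inlHom B P) v (RingHom.ext fun a => ?_)
    show (TrivSqZeroExt.inl (g a) : TrivSqZeroExt B P) =
      TrivSqZeroExt.inl (g a) + TrivSqZeroExt.inr (d (g a))
    rw [hgd a, TrivSqZeroExt.inr_zero, add_zero]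
  intro b
  have h2 : (TrivSqZeroExt.inlHom B P) b = v b := by rw [key]
  have h3 : ((TrivSqZeroExt.inl b : TrivSqZeroExt B P)).snd =
      (TrivSqZeroExt.inl b + TrivSqZeroExt.inr (d b) : TrivSqZeroExt B P).snd :=
    congrArg TrivSqZeroExt.snd h2
  simpa using h3.symm

/-- Lift a ring hom to quotients by ring congruences. -/
def ringConLift {R S : Type u} [Ring R] [Ring S] (c : RingCon R) (c' : RingCon S) (f : R →+* S)
    (H : ∀ a b, c a b → c' (f a) (f b)) : c.Quotient →+* c'.Quotient where
  toFun := Quotient.lift (fun r => ((f r : S) : c'.Quotient))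
    (fun a b hab => Quotient.sound' (H a b hab))
  map_one' := congrArg _ f.map_one
  map_zero' := congrArg _ f.map_zero
  map_mul' := Quotient.ind₂ fun a b => congrArg _ (f.map_mul a b)
  map_add' := Quotient.ind₂ fun a b => congrArg _ (f.map_add a b)

/-- Everything in the closure of the right ideal generated by a set annihilating `y`
annihilates `y`, for `y` an element of a discrete module. -/
theorem aux_ann_closure_span {S : Type u} [Ring S] [TopologicalSpace S] [IsTopologicalRing S]
    {N : Type u} [AddCommGroup N] [Module Sᵐᵒᵖ N] (hN : IsDiscreteModule S N) (y : N)
    (T : Set S) (hT : ∀ t ∈ T, op t • y = 0) :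
    ∀ j ∈ closure (Submodule.span Sᵐᵒᵖ T : Set S), op j • y = 0 := by
  intro j hj
  let Ann : Submodule Sᵐᵒᵖ S :=
    { carrier := {t | op t • y = 0}
      add_mem' := fun {a b} ha hb => by
        simp only [Set.mem_setOf_eq] at *
        rw [op_add, add_smul, ha, hb, add_zero]
      zero_mem' := by simp
      smul_mem' := fun c t ht => by
        simp only [Set.mem_setOf_eq] at *
        show op (t * unop c) • y = 0
        rw [op_mul, mul_smul, ht, smul_zero] }
  have hclosed : IsClosed (Ann : Set S) :=
    AddSubgroup.isClosed_of_isOpen Ann.toAddSubgroup (hN y)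
  have hspan : (Submodule.span Sᵐᵒᵖ T : Set S) ⊆ (Ann : Set S) :=
    Submodule.span_le.mpr hT
  exact closure_minimal hspan hclosed hj
/-- Let `f : R → S` be a strongly right taut continuous map of two-sided linear
topological rings which is a topological ring proepimorphism (for any open
two-sided ideals `I ⊆ R`, `J ⊆ S` with `f(I) ⊆ J`, presented as kernels of
surjections onto the quotient rings, the induced map `R/I → S/J` is a ring
epimorphism).  Then the restriction-of-scalars functor from discrete right
`S`-modules to discrete right `R`-modules is fully faithful: any `R`-linear
additive map `h : M → N` between discrete right `S`-modules is `S`-linear. -/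
theorem discrete_restriction_fully_faithful_of_proepimorphism
    {R S : Type u} [Ring R] [Ring S] [TopologicalSpace R] [TopologicalSpace S]
    [IsTopologicalRing R] [IsTopologicalRing S]
    (hR : IsTwoSidedLinearTopology R) (hS : IsTwoSidedLinearTopology S)
    (f : R →+* S) (hcont : Continuous f)
    -- `f` is strongly right taut:
    (htaut : ∀ U ∈ nhds (0 : R), ∃ I : TwoSidedIdeal R,
      IsOpen (I : Set R) ∧ (I : Set R) ⊆ U ∧
      ∃ J : TwoSidedIdeal S,
        (J : Set S) = closure (Submodule.span Sᵐᵒᵖ (⇑f '' (I : Set R)) : Set S) ∧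
        IsOpen (J : Set S))
    -- `f` is a topological ring proepimorphism:
    (hproepi : ∀ (A B : Type u) [Ring A] [Ring B] (p : R →+* A) (q : S →+* B),
      Function.Surjective p → Function.Surjective q →
      IsOpen (⇑p ⁻¹' {0}) → IsOpen (⇑q ⁻¹' {0}) →
      ⇑f '' (⇑p ⁻¹' {0}) ⊆ ⇑q ⁻¹' {0} →
      ∀ g : A →+* B, g.comp p = q.comp f → g.IsRingEpi)
    (M N : Type u) [AddCommGroup M] [AddCommGroup N]
    [Module Sᵐᵒᵖ M] [Module Sᵐᵒᵖ N]
    (hM : IsDiscreteModule S M) (hN : IsDiscreteModule S N)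
    (h : M →+ N) (hRlin : ∀ (x : M) (r : R), h (op (f r) • x) = op (f r) • h x) :
    ∀ (x : M) (s : S), h (op s • x) = op s • h x := by
  intro x s
  -- Step 1: choose `I` and `J`.
  have hU : ⇑f ⁻¹' {t : S | op t • x = 0} ∈ nhds (0 : R) := by
    have h0 : {t : S | op t • x = 0} ∈ nhds (f 0) := by
      rw [f.map_zero]
      exact (hM x).mem_nhds (by simp)
    exact hcont.continuousAt.preimage_mem_nhds h0
  obtain ⟨I, hIo, hIsub, J, hJeq, hJo⟩ := htaut _ hU
  -- membership facts
  have hmemJ : ∀ r ∈ I, f r ∈ J := by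
    intro r hr
    have : f r ∈ (J : Set S) := by
      rw [hJeq]
      exact subset_closure (Submodule.subset_span ⟨r, hr, rfl⟩)
    exact this
  have hxJ : ∀ j ∈ J, op j • x = 0 := by
    intro j hj
    refine aux_ann_closure_span hM x (⇑f '' (I : Set R)) ?_ j (by rw [← hJeq]; exact hj)
    rintro t ⟨r, hr, rfl⟩
    exact hIsub hr
  have hstabM : ∀ (m : M), (∀ j ∈ J, op j • m = 0) →
      ∀ (t : S), ∀ j ∈ J, op j • (op t • m) = 0 := by
    intro m hm t j hj
    rw [← mul_smul, ← op_mul]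
    exact hm _ (J.mul_mem_left t j hj)
  have hstabN : ∀ (n : N), (∀ j ∈ J, op j • n = 0) →
      ∀ (t : S), ∀ j ∈ J, op j • (op t • n) = 0 := by
    intro n hn t j hj
    rw [← mul_smul, ← op_mul]
    exact hn _ (J.mul_mem_left t j hj)
  have hhJ : ∀ (m : M), (∀ j ∈ J, op j • m = 0) → ∀ j ∈ J, op j • h m = 0 := by
    intro m hm j hj
    refine aux_ann_closure_span hN (h m) (⇑f '' (I : Set R)) ?_ j (by rw [← hJeq]; exact hj)
    rintro t ⟨r, hr, rfl⟩
    rw [← hRlin m r, hm _ (hmemJ r hr), map_zero]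
  -- Step 2: quotient rings and the induced epimorphism.
  set A := I.ringCon.Quotient with hA
  set B := J.ringCon.Quotient with hB
  set p : R →+* A := RingCon.mk' I.ringCon with hp
  set q : S →+* B := RingCon.mk' J.ringCon with hq
  have hrel : ∀ a b, I.ringCon a b → J.ringCon (f a) (f b) := by
    intro a b hab
    rw [TwoSidedIdeal.rel_iff] at hab ⊢
    rw [← map_sub]
    exact hmemJ _ hab
  set g : A →+* B := ringConLift _ _ f hrel with hg
  have hpker : ⇑p ⁻¹' {0} = (I : Set R) := by
    ext r
    simp only [Set.mem_preimage, Set.mem_singleton_iff, SetLike.mem_coe]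
    rw [show (0 : A) = ((0 : R) : A) from rfl]
    rw [show p r = ((r : R) : A) from rfl]
    rw [RingCon.eq]
    exact (TwoSidedIdeal.mem_iff I r).symm
  have hqker : ⇑q ⁻¹' {0} = (J : Set S) := by
    ext t
    simp only [Set.mem_preimage, Set.mem_singleton_iff, SetLike.mem_coe]
    rw [show (0 : B) = ((0 : S) : B) from rfl]
    rw [show q t = ((t : S) : B) from rfl]
    rw [RingCon.eq]
    exact (TwoSidedIdeal.mem_iff J t).symm
  have hsurjp : Function.Surjective ⇑p := fun b => Quotient.inductionOn' b fun r => ⟨r, rfl⟩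
  have hsurjq : Function.Surjective ⇑q := fun b => Quotient.inductionOn' b fun t => ⟨t, rfl⟩
  have himg : ⇑f '' (⇑p ⁻¹' {0}) ⊆ ⇑q ⁻¹' {0} := by
    rw [hpker, hqker]
    rintro _ ⟨r, hr, rfl⟩
    exact hmemJ r hr
  have hepi : g.IsRingEpi :=
    hproepi A B p q hsurjp hsurjq (hpker ▸ hIo) (hqker ▸ hJo) himg g (RingHom.ext fun r => rfl)
  -- Step 3: the `J`-annihilated submodule of `N` and its `Bᵐᵒᵖ`-module structure.
  set NJ : Submodule Sᵐᵒᵖ N :=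
    { carrier := {y | ∀ j ∈ J, op j • y = 0}
      add_mem' := fun {a b} ha hb j hj => by
        rw [smul_add, ha j hj, hb j hj, add_zero]
      zero_mem' := fun j hj => smul_zero _
      smul_mem' := fun c y hy j hj => by
        show op j • (c • y) = 0
        rw [← mul_smul, show op j * c = op (unop c * j) by rw [op_mul, op_unop]]
        exact hy _ (J.mul_mem_left (unop c) j hj) } with hNJ
  letI instSMulB : SMul Bᵐᵒᵖ ↥NJ :=
    ⟨fun b n => Quotient.liftOn' (unop b) (fun t => ((op t : Sᵐᵒᵖ) • n : ↥NJ))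
      (fun t t' htt' => Subtype.ext (by
        have hmem : t - t' ∈ J := (TwoSidedIdeal.rel_iff J t t').mp htt'
        have : op (t - t') • (n : N) = 0 := n.2 _ hmem
        rw [op_sub, sub_smul, sub_eq_zero] at this
        show op t • (n : N) = op t' • (n : N)
        exact this))⟩
  have smul_q : ∀ (t : S) (n : ↥NJ), (op ((t : S) : B) • n : ↥NJ) = (op t : Sᵐᵒᵖ) • n :=
    fun t n => rfl
  have Bop_ind : ∀ (motive : Bᵐᵒᵖ → Prop), (∀ t : S, motive (op (q t))) → ∀ b, motive b := by
    intro motive H b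
    have key : ∀ c : B, motive (op c) := by
      intro c
      obtain ⟨t, ht⟩ := hsurjq c
      rw [← ht]
      exact H t
    simpa using key (unop b)
  letI instModB : Module Bᵐᵒᵖ ↥NJ :=
    { smul := (· • ·)
      one_smul := fun n => by
        show (op ((1 : S) : B)) • n = n
        rw [smul_q, op_one, one_smul]
      mul_smul := fun a b n => by
        induction a using Bop_ind with | _ t =>
        induction b using Bop_ind with | _ u =>
        show (op (((u * t : S) : B))) • n = op ((t : S) : B) • (op ((u : S) : B) • n)
        rw [smul_q, smul_q, smul_q, op_mul, mul_smul]
      smul_zero := fun a => by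
        induction a using Bop_ind with | _ t =>
        show (op ((t : S) : B)) • (0 : ↥NJ) = 0
        rw [smul_q, smul_zero]
      smul_add := fun a n n' => by
        induction a using Bop_ind with | _ t =>
        show (op ((t : S) : B)) • (n + n') = op ((t : S) : B) • n + op ((t : S) : B) • n'
        rw [smul_q, smul_q, smul_q, smul_add]
      add_smul := fun a b n => by
        induction a using Bop_ind with | _ t =>
        induction b using Bop_ind with | _ u =>
        show (op (((t + u : S) : B))) • n = op ((t : S) : B) • n + op ((u : S) : B) • n
        rw [smul_q, smul_q, smul_q, op_add, add_smul]
      zero_smul := fun n => by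
        show (op ((0 : S) : B)) • n = 0
        rw [smul_q, op_zero, zero_smul] }
  -- Step 4: the bimodule `P` and the derivation `d`.
  letI instModBP : Module B (B →+ ↥NJ) :=
    { smul := fun b φ => φ.comp (AddMonoidHom.mulRight b)
      one_smul := fun φ => AddMonoidHom.ext fun c => by
        show φ (c * 1) = φ c
        rw [mul_one]
      mul_smul := fun a b φ => AddMonoidHom.ext fun c => by
        show φ (c * (a * b)) = φ (c * a * b)
        rw [mul_assoc]
      smul_zero := fun b => AddMonoidHom.ext fun c => rfl
      smul_add := fun b φ ψ => AddMonoidHom.ext fun c => rfl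
      add_smul := fun a b φ => AddMonoidHom.ext fun c => by
        show φ (c * (a + b)) = φ (c * a) + φ (c * b)
        rw [mul_add, map_add]
      zero_smul := fun φ => AddMonoidHom.ext fun c => by
        show φ (c * 0) = 0
        rw [mul_zero, map_zero] }
  letI instComm : SMulCommClass B Bᵐᵒᵖ (B →+ ↥NJ) :=
    ⟨fun a b φ => AddMonoidHom.ext fun c => rfl⟩
  set δ : S → S → N := fun t c => h (op t • (op c • x)) - op t • h (op c • x) with hδ
  have hmemδ : ∀ t c, δ t c ∈ NJ := by
    intro t c
    show ∀ j ∈ J, op j • δ t c = 0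
    intro j hj
    have h1 : op j • h (op t • (op c • x)) = 0 :=
      hhJ _ (hstabM _ (hstabM x hxJ c) t) j hj
    have h2 : op j • (op t • h (op c • x)) = 0 :=
      hstabN _ (hhJ _ (hstabM x hxJ c)) t j hj
    rw [hδ]
    simp only [smul_sub, h1, h2, sub_zero]
  have hδc : ∀ t c c', J.ringCon c c' → δ t c = δ t c' := by
    intro t c c' hcc'
    have hx' : op c • x = op c' • x := by
      have hsub : op (c - c') • x = 0 := hxJ _ ((TwoSidedIdeal.rel_iff J c c').mp hcc')
      rw [op_sub, sub_smul, sub_eq_zero] at hsub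
      exact hsub
    rw [hδ]
    simp only [hx']
  have hδt : ∀ t t' c, J.ringCon t t' → δ t c = δ t' c := by
    intro t t' c htt'
    have hJtt : t - t' ∈ J := (TwoSidedIdeal.rel_iff J t t').mp htt'
    have hm : ∀ j ∈ J, op j • (op c • x) = 0 := hstabM x hxJ c
    have h1 : op (t - t') • (op c • x) = 0 := hm _ hJtt
    have h2 : op (t - t') • h (op c • x) = 0 := hhJ _ hm _ hJtt
    have key : δ t c - δ t' c = h (op (t - t') • (op c • x)) - op (t - t') • h (op c • x) := by
      rw [hδ]
      simp only [op_sub, sub_smul, map_sub]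
      abel
    rw [h1, h2, map_zero, sub_zero] at key
    exact sub_eq_zero.mp key
  have hδaddc : ∀ t c c', δ t (c + c') = δ t c + δ t c' := by
    intro t c c'
    rw [hδ]
    simp only [op_add, add_smul, smul_add, map_add]
    abel
  have hδzeroc : ∀ t, δ t 0 = 0 := by
    intro t
    rw [hδ]
    simp
  have hδaddt : ∀ t t' c, δ (t + t') c = δ t c + δ t' c := by
    intro t t' c
    rw [hδ]
    simp only [op_add, add_smul, map_add]
    abel
  have hδzerot : ∀ c, δ 0 c = 0 := by
    intro c
    rw [hδ]
    simp
  set D0 : S → (B →+ ↥NJ) := fun t =>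
    { toFun := fun b => Quotient.liftOn' b (fun c => (⟨δ t c, hmemδ t c⟩ : ↥NJ))
        (fun c c' hcc' => Subtype.ext (hδc t c c' hcc'))
      map_zero' := Subtype.ext (hδzeroc t)
      map_add' := fun a b => Quotient.inductionOn₂' a b fun c c' =>
        Subtype.ext (hδaddc t c c') } with hD0
  set d : B →+ (B →+ ↥NJ) :=
    { toFun := fun b => Quotient.liftOn' b D0
        (fun t t' htt' => AddMonoidHom.ext (Quotient.ind' fun c => Subtype.ext (hδt t t' c htt')))
      map_zero' := AddMonoidHom.ext (Quotient.ind' fun c => Subtype.ext (hδzerot c))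
      map_add' := fun a b => Quotient.inductionOn₂' a b fun t t' =>
        AddMonoidHom.ext (Quotient.ind' fun c => Subtype.ext (hδaddt t t' c)) } with hd_def
  have hderiv : ∀ b b' : B, d (b * b') = b • d b' + op b' • d b := by
    intro b b'
    refine Quotient.inductionOn₂' b b' fun t t' => ?_
    refine AddMonoidHom.ext (Quotient.ind' fun c => ?_)
    refine Subtype.ext ?_
    show δ (t * t') c = δ t' (c * t) + (op t' : Sᵐᵒᵖ) • δ t c
    rw [hδ]
    have e1 : op (c * t) • x = op t • (op c • x) := by rw [op_mul, mul_smul]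
    have e2 : ∀ (y : M), op (t * t') • y = op t' • (op t • y) := fun y => by
      rw [op_mul, mul_smul]
    have e3 : ∀ (y : N), op (t * t') • y = op t' • (op t • y) := fun y => by
      rw [op_mul, mul_smul]
    simp only [e1, e2, e3, smul_sub]
    abel
  have hgd : ∀ a : A, d (g a) = 0 := by
    intro a
    refine Quotient.inductionOn' a fun r => ?_
    refine AddMonoidHom.ext (Quotient.ind' fun c => ?_)
    refine Subtype.ext ?_
    show h (op (f r) • (op c • x)) - op (f r) • h (op c • x) = 0
    rw [hRlin (op c • x) r, sub_self]
  -- Step 5: conclude.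
  have hz := aux_epi_deriv_zero g hepi d hderiv hgd ((s : S) : B)
  have hfin : δ s 1 = 0 :=
    congrArg (fun φ : B →+ ↥NJ => ((φ ((1 : S) : B) : ↥NJ) : N)) hz
  rw [hδ] at hfin
  simp only [op_one, one_smul] at hfin
  exact sub_eq_zero.mp hfin
end

section
/- Let R be a commutative Noetherian ring and I ⊆ R an ideal, and let f : R → S be a homomorphism of commutative rings such that the ideal J = S·f(I) ⊆ S makes S a J-adically (and R an I-adically) complete separated ring, with J generated by the image of I. If P is an S-module whose underlying R-module is an I-contramodule (i.e., Hom_R(R[s⁻¹], P) = 0 = Ext¹_R(R[s⁻¹], P) for all s ∈ I), then P is a J-contramodule S-module. -/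
universe u

open CategoryTheory

/-- An `R`-module `P` is an `I`-contramodule if, for every `s ∈ I`,
`Hom_R(R[s⁻¹], P) = 0 = Ext¹_R(R[s⁻¹], P)`, where `R[s⁻¹]` is the localization
of `R` at `{1, s, s², …}`. -/
def IsContramoduleModule (R : Type u) [CommRing R] (I : Ideal R) (P : Type u)
    [AddCommGroup P] [Module R P] : Prop :=
  ∀ s ∈ I,
    (∀ g : Localization.Away s →ₗ[R] P, g = 0) ∧
    Subsingleton
      (((Ext R (ModuleCat.{u} R) 1).obj
          (Opposite.op (ModuleCat.of R (Localization.Away s)))).obj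
        (ModuleCat.of R P))

namespace ContraAux

open Function

variable {S : Type u} [CommRing S]

section T

variable {M N : Type u} [AddCommGroup M] [Module S M] [AddCommGroup N] [Module S N]

/-- The operator `q ↦ (n ↦ q n - φ (q (n+1)))` as a linear map. -/
def TE (φ : Module.End S M) : (ℕ → M) →ₗ[S] (ℕ → M) where
  toFun q n := q n - φ (q (n+1))
  map_add' x y := by funext n; simp; abel
  map_smul' c x := by funext n; simp [smul_sub]

@[simp] lemma TE_apply (φ : Module.End S M) (q : ℕ → M) (n : ℕ) :
    TE φ q n = q n - φ (q (n+1)) := rfl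

lemma comm_apply {φ ψ : Module.End S M} (h : Commute φ ψ) (y : M) :
    φ (ψ y) = ψ (φ y) := by
  have := DFunLike.congr_fun h.eq y
  simpa [Module.End.mul_apply] using this

@[simp] lemma TEs_apply (a : S) (q : ℕ → M) (n : ℕ) :
    TE (LinearMap.lsmul S M a) q n = q n - a • q (n+1) := rfl

lemma TE_shift (φ : Module.End S M) (x : ℕ → M) :
    TE φ (fun n => x (n+1)) = fun n => TE φ x (n+1) := rfl

lemma TE_comp (φ ψ : Module.End S M) (h : Commute φ ψ) (x : ℕ → M) :
    TE φ (fun n => ψ (x n)) = fun n => ψ (TE φ x n) := by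
  funext n
  simp [comm_apply h]

/-- `Good a M` : the module `M` is an `a`-contramodule, in the concrete form that
the map `q ↦ (n ↦ q n - a • q (n+1))` on `ℕ → M` is bijective. -/
def Good (a : S) (M : Type u) [AddCommGroup M] [Module S M] : Prop :=
  Bijective (TE (LinearMap.lsmul S M a))

lemma good_zero : Good (0 : S) M := by
  have : TE (LinearMap.lsmul S M 0) = LinearMap.id := by
    ext q n; simp
  rw [Good, this]; exact bijective_id

/-- Product lemma. -/
lemma bij_TE_mul {φ ψ : Module.End S M} (hφ : Bijective (TE φ))
    (hc : Commute φ ψ) : Bijective (TE (ψ * φ)) := by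
  constructor
  · rw [injective_iff_map_eq_zero]
    intro p hp
    funext n
    set x : ℕ → M := fun k => (ψ^k) (p (n+k)) with hxdef
    have hx : TE φ x = 0 := by
      funext k
      have h1 : p (n+k) = ψ (φ (p (n+k+1))) := by
        have := congrFun hp (n+k)
        simp only [TE_apply, Pi.zero_apply, sub_eq_zero, Module.End.mul_apply] at this
        exact this
      have h2 : φ ((ψ^(k+1)) (p (n+k+1))) = (ψ^k) (ψ (φ (p (n+k+1)))) := by
        have : φ * ψ^(k+1) = ψ^k * (ψ * φ) := by
          rw [(hc.pow_right (k+1)).eq, pow_succ, mul_assoc]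
        have := DFunLike.congr_fun this (p (n+k+1))
        simpa [Module.End.mul_apply] using this
      simp only [TE_apply, hxdef, Pi.zero_apply]
      show (ψ^k) (p (n+k)) - φ ((ψ^(k+1)) (p (n+(k+1)))) = 0
      rw [show n+(k+1) = n+k+1 from rfl, h2, ← map_sub, ← h1, sub_self, map_zero]
    have hx0 : x = 0 := (injective_iff_map_eq_zero (TE φ)).mp hφ.injective x hx
    have := congrFun hx0 0
    simpa [hxdef] using this
  · intro q
    set Q : ℕ → ℕ → M := fun n k => (ψ^k) (q (n+k)) with hQdef
    set P : ℕ → ℕ → M := fun n => surjInv hφ.surjective (Q n) with hPdef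
    have hP : ∀ n, TE φ (P n) = Q n := fun n => surjInv_eq hφ.surjective (Q n)
    have claim : ∀ n k, P n (k+1) = ψ (P (n+1) k) := by
      intro n k
      have : (fun k => P n (k+1)) = (fun k => ψ (P (n+1) k)) := by
        apply hφ.injective
        rw [TE_shift, TE_comp φ ψ hc, hP, hP]
        funext k
        show Q n (k+1) = ψ (Q (n+1) k)
        simp only [hQdef]
        rw [show n+1+k = n+(k+1) from by omega, pow_succ']
        rfl
      exact congrFun this k
    refine ⟨fun n => P n 0, ?_⟩
    funext n
    have : φ (P n 1) = φ (ψ (P (n+1) 0)) := by rw [claim n 0]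
    simp only [TE_apply, Module.End.mul_apply]
    calc P n 0 - ψ (φ (P (n+1) 0)) = P n 0 - φ (ψ (P (n+1) 0)) := by
          rw [comm_apply hc]
      _ = P n 0 - φ (P n 1) := by rw [← claim n 0]
      _ = TE φ (P n) 0 := rfl
      _ = q n := by rw [hP]; simp [hQdef]

lemma bij_one_sub {φ : Module.End S M} (hφ : Bijective (TE φ)) :
    Bijective ⇑(1 - φ : Module.End S M) := by
  constructor
  · rw [injective_iff_map_eq_zero]
    intro y hy
    have h1 : y - φ y = 0 := by simpa using hy
    have : TE φ (fun _ => y) = 0 := by funext n; simpa using h1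
    have := (injective_iff_map_eq_zero (TE φ)).mp hφ.injective _ this
    exact congrFun this 0
  · intro x
    set p : ℕ → M := surjInv hφ.surjective (fun _ => x) with hpdef
    have hp : TE φ p = fun _ => x := surjInv_eq hφ.surjective _
    have hshift : (fun n => p (n+1)) = p := by
      apply hφ.injective
      rw [TE_shift, hp]
    have h01 : p 1 = p 0 := congrFun hshift 0
    refine ⟨p 0, ?_⟩
    have := congrFun hp 0
    simp only [TE_apply] at this
    simpa [h01] using this

lemma eq_zero_of_good_inv {φ : Module.End S M} (hφ : Bijective (TE φ))
    (g : M → M) (hg : ∀ x, φ (g x) = x) (x : M) : x = 0 := by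
  set p : ℕ → M := fun n => g^[n] x with hpdef
  have hp : TE φ p = 0 := by
    funext n
    simp only [TE_apply, Pi.zero_apply, hpdef]
    rw [iterate_succ_apply', hg, sub_self]
  have := (injective_iff_map_eq_zero (TE φ)).mp hφ.injective _ hp
  simpa [hpdef] using congrFun this 0

lemma good_pi {a : S} (ha : Good a M) : Good a (ℕ → M) := by
  constructor
  · rw [injective_iff_map_eq_zero]
    intro Q hQ
    funext n m
    have : TE (LinearMap.lsmul S M a) (fun n => Q n m) = 0 := by
      funext n'
      have := congrFun (congrFun hQ n') m
      simpa using this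
    have := (injective_iff_map_eq_zero _).mp ha.injective _ this
    exact congrFun this n
  · intro R
    refine ⟨fun n m => surjInv ha.surjective (fun n' => R n' m) n, ?_⟩
    funext n m
    have := congrFun (surjInv_eq ha.surjective (fun n' => R n' m)) n
    simpa using this

lemma good_ker {a : S} (h : M →ₗ[S] N) (ha : Good a M) (hb : Good a N) :
    Good a ↥(LinearMap.ker h) := by
  constructor
  · rw [injective_iff_map_eq_zero]
    intro q hq
    funext n
    have hv : TE (LinearMap.lsmul S M a) (fun n => (q n : M)) = 0 := by
      funext n'
      have := congrFun hq n'
      have := congrArg (Subtype.val) this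
      simpa using this
    have := (injective_iff_map_eq_zero _).mp ha.injective _ hv
    exact Subtype.ext (congrFun this n)
  · intro q
    set p : ℕ → M := surjInv ha.surjective (fun n => (q n : M)) with hpdef
    have hp : TE (LinearMap.lsmul S M a) p = fun n => (q n : M) :=
      surjInv_eq ha.surjective _
    have hmem : ∀ n, p n ∈ LinearMap.ker h := by
      have hw : TE (LinearMap.lsmul S N a) (fun n => h (p n)) = 0 := by
        funext n
        have h1 : h (p n - a • p (n+1)) = h ((q n : M)) := by
          rw [← TEs_apply a, hp]
        have h2 : h ((q n : M)) = 0 := (q n).2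
        simpa [map_sub, map_smul, h2] using h1
      have := (injective_iff_map_eq_zero _).mp hb.injective _ hw
      intro n
      exact congrFun this n
    refine ⟨fun n => ⟨p n, hmem n⟩, ?_⟩
    funext n
    apply Subtype.ext
    show p n - a • p (n+1) = (q n : M)
    rw [← TEs_apply a, hp]

lemma good_quot {a : S} (h : M →ₗ[S] N) (ha : Good a M) (hb : Good a N) :
    Good a (N ⧸ LinearMap.range h) := by
  set mk := (LinearMap.range h).mkQ with hmkdef
  have hnat : ∀ v : ℕ → N, TE (LinearMap.lsmul S _ a) (fun n => mk (v n))
      = fun n => mk (TE (LinearMap.lsmul S N a) v n) := by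
    intro v; funext n; simp
  constructor
  · rw [injective_iff_map_eq_zero]
    intro qq hqq
    funext n
    obtain ⟨v, hv⟩ : ∃ v : ℕ → N, ∀ n, mk (v n) = qq n := by
      refine ⟨fun n => surjInv (Submodule.Quotient.mk_surjective _) (qq n), fun n => ?_⟩
      exact surjInv_eq (Submodule.Quotient.mk_surjective _) (qq n)
    have hTv : ∀ n, TE (LinearMap.lsmul S N a) v n ∈ LinearMap.range h := by
      intro n
      have : mk (TE (LinearMap.lsmul S N a) v n) = 0 := by
        have := congrFun (hnat v) n
        rw [← this]
        have h2 : (fun n => mk (v n)) = qq := funext hv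
        rw [h2]
        exact congrFun hqq n
      rwa [hmkdef, Submodule.mkQ_apply, Submodule.Quotient.mk_eq_zero] at this
    choose u hu using hTv
    set w : ℕ → M := surjInv ha.surjective u with hwdef
    have hw : TE (LinearMap.lsmul S M a) w = u := surjInv_eq ha.surjective u
    have hhw : (fun n => h (w n)) = v := by
      apply hb.injective
      funext n
      show h (w n) - a • h (w (n+1)) = TE (LinearMap.lsmul S N a) v n
      rw [← map_smul, ← map_sub]
      have : w n - a • w (n+1) = u n := by
        rw [← TEs_apply a, hw]
      rw [this, hu]
    have : v n ∈ LinearMap.range h := ⟨w n, congrFun hhw n⟩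
    show qq n = 0
    rw [← hv n, hmkdef, Submodule.mkQ_apply, Submodule.Quotient.mk_eq_zero]
    exact this
  · intro qq
    obtain ⟨v, hv⟩ : ∃ v : ℕ → N, ∀ n, mk (v n) = qq n := by
      refine ⟨fun n => surjInv (Submodule.Quotient.mk_surjective _) (qq n), fun n => ?_⟩
      exact surjInv_eq (Submodule.Quotient.mk_surjective _) (qq n)
    set p : ℕ → N := surjInv hb.surjective v with hpdef
    have hp : TE (LinearMap.lsmul S N a) p = v := surjInv_eq hb.surjective v
    refine ⟨fun n => mk (p n), ?_⟩
    rw [hnat p, hp]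
    funext n
    exact hv n

lemma good_smul {a : S} (s : S) (ha : Good a M) : Good (s * a) M := by
  have h1 : LinearMap.lsmul S M (s * a) = LinearMap.lsmul S M s * LinearMap.lsmul S M a := by
    ext x; simp only [Module.End.mul_apply, LinearMap.lsmul_apply]; rw [mul_smul]
  have hc : Commute (LinearMap.lsmul S M a) (LinearMap.lsmul S M s) := by
    ext x; simp only [Module.End.mul_apply, LinearMap.lsmul_apply]; rw [smul_comm]
  rw [Good, h1]
  exact bij_TE_mul ha hc

lemma subsingleton_of_goods {a b : S} (ha : Good a M) (hb : Good b M)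
    (hbij : Bijective (fun x : M => (a+b) • x)) : ∀ x : M, x = 0 := by
  have hbij' : Bijective ⇑(LinearMap.lsmul S M (a+b)) := hbij
  set e : M ≃ₗ[S] M := LinearEquiv.ofBijective _ hbij' with hedef
  have he : ∀ x : M, e x = (a+b) • x := fun x => rfl
  set γ : Module.End S M := (e.symm : M →ₗ[S] M) * LinearMap.lsmul S M a with hγdef
  set δ : Module.End S M := (e.symm : M →ₗ[S] M) * LinearMap.lsmul S M b with hδdef
  have hcommγ : Commute (LinearMap.lsmul S M a) ((e.symm : M →ₗ[S] M)) := by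
    ext x
    simp only [Module.End.mul_apply, LinearMap.lsmul_apply, LinearEquiv.coe_coe, map_smul]
  have hcommδ : Commute (LinearMap.lsmul S M b) ((e.symm : M →ₗ[S] M)) := by
    ext x
    simp only [Module.End.mul_apply, LinearMap.lsmul_apply, LinearEquiv.coe_coe, map_smul]
  have hγ : Bijective (TE γ) := bij_TE_mul ha hcommγ
  have hδ : Bijective (TE δ) := bij_TE_mul hb hcommδ
  have hδγ : (1 : Module.End S M) - γ = δ := by
    ext x
    apply e.injective
    simp only [hγdef, hδdef, LinearMap.sub_apply, Module.End.one_apply, Module.End.mul_apply,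
      LinearMap.lsmul_apply, LinearEquiv.coe_coe, map_sub]
    rw [LinearEquiv.apply_symm_apply, LinearEquiv.apply_symm_apply, he, add_smul]
    abel
  have hbijδ : Bijective ⇑δ := by
    rw [← hδγ]
    exact bij_one_sub hγ
  exact eq_zero_of_good_inv hδ (surjInv hbijδ.surjective)
    (fun x => surjInv_eq hbijδ.surjective x)

lemma good_add {a b : S} (ha : Good a M) (hb : Good b M) : Good (a+b) M := by
  set F : (ℕ → M) →ₗ[S] (ℕ → M) := TE (LinearMap.lsmul S M (a+b)) with hFdef
  have hKa : Good a ↥(LinearMap.ker F) := good_ker F (good_pi ha) (good_pi ha)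
  have hKb : Good b ↥(LinearMap.ker F) := good_ker F (good_pi hb) (good_pi hb)
  have hCa : Good a ((ℕ → M) ⧸ LinearMap.range F) := good_quot F (good_pi ha) (good_pi ha)
  have hCb : Good b ((ℕ → M) ⧸ LinearMap.range F) := good_quot F (good_pi hb) (good_pi hb)
  -- the kernel
  have hker : ∀ (x : ℕ → M), x ∈ LinearMap.ker F → ∀ n, x n - (a+b) • x (n+1) = 0 := by
    intro x hx n
    exact congrFun (LinearMap.mem_ker.mp hx) n
  have hbijK : Bijective (fun x : ↥(LinearMap.ker F) => (a+b) • x) := by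
    have hshift : ∀ x : ↥(LinearMap.ker F), (fun n => (x : ℕ → M) (n+1)) ∈ LinearMap.ker F := by
      intro x
      rw [LinearMap.mem_ker]
      funext n
      exact hker _ x.2 (n+1)
    refine bijective_iff_has_inverse.mpr ⟨fun x => ⟨fun n => (x : ℕ → M) (n+1), hshift x⟩, ?_, ?_⟩
    · intro x
      apply Subtype.ext
      funext n
      show ((a+b) • x : ℕ → M) (n+1+1-1) = (x : ℕ → M) n
      have := hker _ x.2 n
      simp only [Submodule.coe_smul, Pi.smul_apply]
      rw [sub_eq_zero] at this
      exact this.symm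
    · intro x
      apply Subtype.ext
      funext n
      show (a+b) • (x : ℕ → M) (n+1) = (x : ℕ → M) n
      have := hker _ x.2 n
      rw [sub_eq_zero] at this
      exact this.symm
  have hK0 := subsingleton_of_goods hKa hKb hbijK
  have hinj : Injective ⇑F := by
    rw [← LinearMap.ker_eq_bot]
    rw [Submodule.eq_bot_iff]
    intro x hx
    exact congrArg Subtype.val (hK0 ⟨x, hx⟩)
  -- the cokernel
  set σM : (ℕ → M) →ₗ[S] (ℕ → M) :=
    { toFun := fun q n => q (n+1)
      map_add' := fun x y => rfl
      map_smul' := fun c x => rfl } with hσdef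
  have hle : LinearMap.range F ≤ Submodule.comap σM (LinearMap.range F) := by
    rintro x ⟨y, rfl⟩
    exact ⟨σM y, rfl⟩
  set σC := Submodule.mapQ (LinearMap.range F) (LinearMap.range F) σM hle with hσCdef
  have hmkdiff : ∀ q : ℕ → M, ((a+b) • σM q - q) ∈ LinearMap.range F := by
    intro q
    refine ⟨-q, ?_⟩
    rw [map_neg]
    funext n
    show -(q n - (a+b) • q (n+1)) = (a+b) • q (n+1) - q n
    abel
  have hbijC : Bijective (fun x : (ℕ → M) ⧸ LinearMap.range F => (a+b) • x) := by
    refine bijective_iff_has_inverse.mpr ⟨σC, ?_, ?_⟩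
    · intro x
      obtain ⟨q, rfl⟩ := Submodule.Quotient.mk_surjective _ x
      show σC ((a+b) • Submodule.Quotient.mk q) = Submodule.Quotient.mk q
      rw [← Submodule.Quotient.mk_smul, Submodule.mapQ_apply]
      rw [Submodule.Quotient.eq]
      have : σM ((a+b) • q) = (a+b) • σM q := map_smul σM _ q
      rw [this]
      exact hmkdiff q
    · intro x
      obtain ⟨q, rfl⟩ := Submodule.Quotient.mk_surjective _ x
      show (a+b) • σC (Submodule.Quotient.mk q) = Submodule.Quotient.mk q
      rw [Submodule.mapQ_apply, ← Submodule.Quotient.mk_smul]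
      rw [Submodule.Quotient.eq]
      exact hmkdiff q
  have hC0 := subsingleton_of_goods hCa hCb hbijC
  have hsurj : Surjective ⇑F := by
    rw [← LinearMap.range_eq_top]
    rw [← Submodule.Quotient.subsingleton_iff]
    exact subsingleton_of_forall_eq 0 fun x => hC0 x
  exact ⟨hinj, hsurj⟩

lemma good_of_mem_span {G : Set S} (hG : ∀ g ∈ G, Good g M) {t : S}
    (ht : t ∈ Ideal.span G) : Good t M := by
  induction ht using Submodule.span_induction with
  | mem x hx => exact hG x hx
  | zero => exact good_zero
  | add x y _ _ hx hy => exact good_add hx hy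
  | smul s x _ hx => rw [smul_eq_mul]; exact good_smul s hx

end T

noncomputable section Res

open Localization CategoryTheory

variable {A : Type u} [CommRing A] (s : A)

/-- `s^n` as an element of the submonoid of powers of `s`. -/
abbrev spow (n : ℕ) : Submonoid.powers s := ⟨s^n, ⟨n, rfl⟩⟩

/-- `s^{-n}` in the localization away from `s`. -/
def xp (n : ℕ) : Localization.Away s :=
  IsLocalization.mk' (Localization.Away s) (1 : A) (spow s n)

lemma xp_mul_pow (n : ℕ) :
    xp s n * algebraMap A (Localization.Away s) (s^n) = 1 := by
  have := IsLocalization.mk'_spec (Localization.Away s) (1 : A) (spow s n)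
  simpa [xp] using this

lemma s_smul_xp_succ (n : ℕ) : s • xp s (n+1) = xp s n := by
  simp only [xp, Algebra.smul_def]
  rw [← IsLocalization.mk'_one (M := Submonoid.powers s) (Localization.Away s) s,
    ← IsLocalization.mk'_mul]
  apply IsLocalization.mk'_eq_of_eq
  simp [pow_succ, mul_comm]

lemma smul_xp (a : A) (n : ℕ) :
    a • xp s n = IsLocalization.mk' (Localization.Away s) a (spow s n) := by
  simp only [xp, Algebra.smul_def]
  rw [← IsLocalization.mk'_one (M := Submonoid.powers s) (Localization.Away s) a,
    ← IsLocalization.mk'_mul]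
  simp

/-- The differential `e_n ↦ e_n - s e_{n+1}` of the standard resolution of `A[s⁻¹]`. -/
def dlin : (ℕ →₀ A) →ₗ[A] (ℕ →₀ A) :=
  LinearMap.id - s • Finsupp.lmapDomain A A (· + 1)

/-- The augmentation `e_n ↦ s^{-n}` of the standard resolution. -/
def plin : (ℕ →₀ A) →ₗ[A] Localization.Away s :=
  Finsupp.linearCombination A (xp s)

lemma dlin_apply_zero (b : ℕ →₀ A) : dlin s b 0 = b 0 := by
  simp [dlin, Finsupp.mapDomain_notin_range (f := (· + 1)) b 0 (by simp)]

lemma dlin_apply_succ (b : ℕ →₀ A) (n : ℕ) : dlin s b (n+1) = b (n+1) - s * b n := by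
  have : Finsupp.mapDomain (· + 1) b (n+1) = b n :=
    Finsupp.mapDomain_apply (add_left_injective 1) b n
  simp [dlin, this]

lemma dlin_single (n : ℕ) :
    dlin s (Finsupp.single n 1) = Finsupp.single n 1 - Finsupp.single (n+1) s := by
  ext m
  simp [dlin, Finsupp.mapDomain_single, Finsupp.smul_single]

lemma dlin_inj : Injective (dlin s) := by
  rw [injective_iff_map_eq_zero]
  intro b hb
  ext m
  induction m with
  | zero =>
    have h0 : dlin s b 0 = 0 := congrFun (congrArg DFunLike.coe hb) 0
    rw [dlin_apply_zero] at h0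
    simpa using h0
  | succ n ih =>
    have h0 : dlin s b (n+1) = 0 := congrFun (congrArg DFunLike.coe hb) (n+1)
    rw [dlin_apply_succ] at h0
    have : b n = 0 := by simpa using ih
    rw [this, mul_zero, sub_zero] at h0
    simpa using h0

lemma plin_single (n : ℕ) : plin s (Finsupp.single n 1) = xp s n := by
  simp [plin, Finsupp.linearCombination_single]

lemma plin_surj : Surjective (plin s) := by
  intro z
  obtain ⟨⟨a, ⟨y, hy⟩⟩, h⟩ := IsLocalization.mk'_surjective (Submonoid.powers s) z
  obtain ⟨n, rfl⟩ := hy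
  refine ⟨Finsupp.single n a, ?_⟩
  have h1 : Finsupp.single n a = a • Finsupp.single n (1:A) := by simp [Finsupp.smul_single]
  rw [h1, map_smul, plin_single, smul_xp]
  exact h

lemma plin_dlin_single (n : ℕ) : plin s (dlin s (Finsupp.single n 1)) = 0 := by
  rw [dlin_single, map_sub, plin_single]
  have h2 : plin s (Finsupp.single (n+1) s) = s • xp s (n+1) := by
    have h3 : Finsupp.single (n+1) s = s • Finsupp.single (n+1) (1:A) := by
      simp [Finsupp.smul_single]
    rw [h3, map_smul, plin_single]
  rw [h2, s_smul_xp_succ, sub_self]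

lemma plin_comp_dlin : (plin s).comp (dlin s) = 0 := by
  apply Finsupp.lhom_ext
  intro n b
  have h1 : Finsupp.single n b = b • Finsupp.single n (1:A) := by simp [Finsupp.smul_single]
  rw [h1, map_smul, map_smul]
  show b • plin s (dlin s (Finsupp.single n 1)) = b • (0 : (ℕ →₀ A) →ₗ[A] Localization.Away s) (Finsupp.single n 1)
  rw [plin_dlin_single]
  simp

lemma ker_plin_le_range_dlin (b : ℕ →₀ A) (hb : plin s b = 0) :
    ∃ c, dlin s c = b := by
  classical
  obtain ⟨G, hG0, hGsucc⟩ : ∃ G : ℕ → A, G 0 = b 0 ∧ ∀ n, G (n+1) = s * G n + b (n+1) :=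
    ⟨fun n => Nat.rec (b 0) (fun n g => s * g + b (n+1)) n, rfl, fun n => rfl⟩
  obtain ⟨N, hbN⟩ : ∃ N, ∀ m, N ≤ m → b m = 0 := by
    refine ⟨(b.support.sup id)+1, fun m hm => ?_⟩
    by_contra h
    have hmem : m ∈ b.support := Finsupp.mem_support_iff.mpr h
    have := Finset.le_sup (f := id) hmem
    simp only [id_eq] at this
    omega
  have hpartial : ∀ K, algebraMap A (Localization.Away s) (G K) * xp s K
      = ∑ i ∈ Finset.range (K+1), b i • xp s i := by
    intro K
    induction K with
    | zero => simp [hG0, xp, Algebra.smul_def]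
    | succ K ih =>
      rw [hGsucc, map_add, map_mul, add_mul]
      have h1 : algebraMap A (Localization.Away s) s * algebraMap A (Localization.Away s) (G K) *
          xp s (K+1) = algebraMap A (Localization.Away s) (G K) * xp s K := by
        rw [mul_comm (algebraMap A (Localization.Away s) s), mul_assoc]
        congr 1
        rw [← Algebra.smul_def, s_smul_xp_succ]
      rw [h1, ih, Finset.sum_range_succ (n := K+1)]
      congr 1
      rw [Algebra.smul_def]
  have hsum : ∑ i ∈ Finset.range (N+1), b i • xp s i = 0 := by
    have hsupp : b.support ⊆ Finset.range (N+1) := by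
      intro m hm
      simp only [Finset.mem_range]
      by_contra hc
      exact (Finsupp.mem_support_iff.mp hm) (hbN m (by omega))
    have : plin s b = ∑ i ∈ Finset.range (N+1), b i • xp s i := by
      rw [plin, Finsupp.linearCombination_apply]
      exact Finsupp.sum_of_support_subset b hsupp _ (by intros; simp)
    rw [← this, hb]
  have hGN : algebraMap A (Localization.Away s) (G N) = 0 := by
    have h1 : algebraMap A (Localization.Away s) (G N) * xp s N = 0 := by
      rw [hpartial N, hsum]
    have h2 : algebraMap A (Localization.Away s) (G N) *
        (xp s N * algebraMap A (Localization.Away s) (s^N)) = 0 := by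
      rw [← mul_assoc, h1, zero_mul]
    rwa [xp_mul_pow, mul_one] at h2
  obtain ⟨⟨m, j, rfl⟩, hm⟩ := (IsLocalization.map_eq_zero_iff (Submonoid.powers s) _ _).mp hGN
  have hstep : ∀ n, N ≤ n → G (n+1) = s * G n := by
    intro n hn
    rw [hGsucc, hbN (n+1) (by omega), add_zero]
  have hGhigh : ∀ n, G (N + j + n) = 0 := by
    have hNj : G (N + j) = 0 := by
      have hpowmul : ∀ i, G (N + i) = s^i * G N := by
        intro i
        induction i with
        | zero => simp
        | succ i ih =>
          rw [show N + (i+1) = (N+i) + 1 from rfl, hstep _ (by omega), ih, pow_succ]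
          ring
      rw [hpowmul j]
      exact hm
    intro n
    induction n with
    | zero => simpa using hNj
    | succ n ih =>
      rw [show N + j + (n+1) = (N+j+n) + 1 from rfl, hstep _ (by omega), ih, mul_zero]
  refine ⟨Finsupp.onFinset (Finset.range (N+j)) G ?_, ?_⟩
  · intro n hn
    simp only [Finset.mem_range]
    by_contra hcon
    push_neg at hcon
    obtain ⟨k, rfl⟩ := Nat.exists_eq_add_of_le hcon
    exact hn (hGhigh k)
  · ext m
    cases m with
    | zero => rw [dlin_apply_zero]; simpa using hG0
    | succ n =>
      rw [dlin_apply_succ]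
      show G (n+1) - s * G n = b (n+1)
      rw [hGsucc]; ring

section Cat

open CategoryTheory CategoryTheory.Limits

instance punit_projective : Projective (ModuleCat.of A PUnit.{u+1}) := by
  constructor
  intro E X' f e he
  refine ⟨0, ?_⟩
  have : Subsingleton ((ModuleCat.of A PUnit.{u+1}) ⟶ X') := by
    constructor
    intro g h
    apply ModuleCat.hom_ext
    apply LinearMap.ext
    intro x
    have hx : x = 0 := Subsingleton.elim x 0
    rw [hx, map_zero, map_zero]
  exact Subsingleton.elim _ _

/-- The objects of the standard resolution of `A[s⁻¹]`. -/
def Xc : ℕ → ModuleCat.{u} A := fun n => match n with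
  | 0 => ModuleCat.of A (ℕ →₀ A)
  | 1 => ModuleCat.of A (ℕ →₀ A)
  | _+2 => ModuleCat.of A PUnit.{u+1}

/-- The differentials of the standard resolution of `A[s⁻¹]`. -/
def dc : ∀ n : ℕ, Xc (A := A) (n+1) ⟶ Xc n := fun n => match n with
  | 0 => ModuleCat.ofHom (dlin s)
  | _+1 => 0

/-- The standard projective resolution complex of `A[s⁻¹]`. -/
def Kc : ChainComplex (ModuleCat.{u} A) ℕ :=
  ChainComplex.of Xc (dc s) (fun n => zero_comp)

lemma Kc_d (j : ℕ) : (Kc s).d (j+1) j = dc s j :=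
  ChainComplex.of_d _ _ j

instance Kc_projective (n : ℕ) : Projective ((Kc s).X n) := by
  match n with
  | 0 => exact ModuleCat.projective_of_free (M := ModuleCat.of A (ℕ →₀ A)) Finsupp.basisSingleOne
  | 1 => exact ModuleCat.projective_of_free (M := ModuleCat.of A (ℕ →₀ A)) Finsupp.basisSingleOne
  | (n+2) => exact punit_projective

/-- The augmentation map to the single complex. -/
def pc : Kc s ⟶ (ChainComplex.single₀ (ModuleCat.{u} A)).obj
    (ModuleCat.of A (Localization.Away s)) :=
  (ChainComplex.toSingle₀Equiv _ _).symm ⟨ModuleCat.ofHom (plin s), by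
    rw [Kc_d]
    exact ModuleCat.hom_ext (plin_comp_dlin s)⟩

lemma pc_f_zero : (pc s).f 0 = ModuleCat.ofHom (plin s) := by
  apply ChainComplex.toSingle₀Equiv_symm_apply_f_zero

/-- The standard projective resolution of `A[s⁻¹]`. -/
def resAway : ProjectiveResolution (ModuleCat.of A (Localization.Away s)) where
  complex := Kc s
  π := pc s
  quasiIso := ⟨fun n => by
    cases n with
    | zero =>
      rw [ChainComplex.quasiIsoAt₀_iff, ShortComplex.quasiIso_iff_of_zeros']
      · constructor
        · rw [ShortComplex.moduleCat_exact_iff]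
          intro y hy
          have hy' : plin s y = 0 := by
            have h1 : ((pc s).f 0) y = 0 := hy
            rw [pc_f_zero] at h1
            exact h1
          obtain ⟨c, hc⟩ := ker_plin_le_range_dlin s y hy'
          refine ⟨c, ?_⟩
          show ((Kc s).d 1 0) c = y
          rw [Kc_d]
          exact hc
        · rw [ModuleCat.epi_iff_surjective]
          intro z
          obtain ⟨y, hy⟩ := plin_surj s z
          refine ⟨y, ?_⟩
          show ((pc s).f 0) y = z
          rw [pc_f_zero]
          exact hy
      all_goals rfl
    | succ n =>
      rw [quasiIsoAt_iff_exactAt']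
      · rw [HomologicalComplex.exactAt_iff' _ (n+2) (n+1) n (by simp) (by simp)]
        cases n with
        | zero =>
          rw [ShortComplex.moduleCat_exact_iff]
          intro y hy
          have hy' : dlin s y = 0 := by
            have h1 : ((Kc s).d 1 0) y = 0 := hy
            rw [Kc_d] at h1
            exact h1
          have hy0 : y = 0 := (injective_iff_map_eq_zero _).mp (dlin_inj s) y hy'
          refine ⟨0, ?_⟩
          show ((Kc s).d 2 1) 0 = y
          rw [Kc_d]
          show (0 : Xc 2 ⟶ Xc 1) 0 = y
          rw [hy0]
          simp
          rfl
        | succ n =>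
          exact ShortComplex.exact_of_isZero_X₂ _
            (ModuleCat.isZero_of_subsingleton (ModuleCat.of A PUnit.{u+1}))
      · apply ChainComplex.exactAt_succ_single_obj⟩

section Hlgy

variable (P : Type u) [AddCommGroup P] [Module A P]

lemma subsingleton_iff_isZero (M : ModuleCat.{u} A) : Subsingleton M ↔ IsZero M := by
  constructor
  · intro h
    exact ModuleCat.isZero_of_subsingleton M
  · intro h
    constructor
    intro x y
    have h1 : (𝟙 M : M ⟶ M) = 0 := h.eq_of_src _ _
    have hx : x = (𝟙 M : M ⟶ M) x := rfl
    have hy : y = (𝟙 M : M ⟶ M) y := rfl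
    rw [hx, hy, h1]
    rfl

/-- Evaluation of a hom from the free module on its basis. -/
def Emap : ((ModuleCat.of A (ℕ →₀ A)) ⟶ ModuleCat.of A P) → (ℕ → P) :=
  fun g n => g (Finsupp.single n 1)

lemma Emap_bij : Bijective (Emap (A := A) (P := P)) := by
  refine bijective_iff_has_inverse.mpr
    ⟨fun p => ModuleCat.ofHom (Finsupp.linearCombination A p), ?_, ?_⟩
  · intro g
    apply ModuleCat.hom_ext
    apply Finsupp.lhom_ext
    intro n b
    show Finsupp.linearCombination A (Emap P g) (Finsupp.single n b) = g (Finsupp.single n b)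
    rw [Finsupp.linearCombination_single]
    have h1 : Finsupp.single n b = b • Finsupp.single n (1:A) := by simp [Finsupp.smul_single]
    rw [h1, map_smul]
    rfl
  · intro p
    funext n
    show Finsupp.linearCombination A p (Finsupp.single n 1) = p n
    rw [Finsupp.linearCombination_single, one_smul]

lemma Emap_natural (g : (ModuleCat.of A (ℕ →₀ A)) ⟶ ModuleCat.of A P) :
    Emap P (ModuleCat.ofHom (dlin s) ≫ g) = TE (LinearMap.lsmul A P s) (Emap P g) := by
  funext n
  show g (dlin s (Finsupp.single n 1)) = Emap P g n - s • Emap P g (n+1)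
  rw [dlin_single, map_sub]
  congr 1
  have h1 : Finsupp.single (n+1) s = s • Finsupp.single (n+1) (1:A) := by
    simp [Finsupp.smul_single]
  rw [h1, map_smul]
  rfl

lemma ext_subsingleton_iff :
    Subsingleton (((Ext A (ModuleCat.{u} A) 1).obj
        (Opposite.op (ModuleCat.of A (Localization.Away s)))).obj (ModuleCat.of A P))
      ↔ Surjective ⇑(TE (LinearMap.lsmul A P s)) := by
  haveI hsub2 : Subsingleton ((Kc s).X 2 ⟶ ModuleCat.of A P) := by
    constructor
    intro g h
    apply ModuleCat.hom_ext
    apply LinearMap.ext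
    intro x
    haveI : Subsingleton ((Kc s).X 2 : Type u) := by
      show Subsingleton PUnit.{u+1}
      infer_instance
    have hx : x = 0 := Subsingleton.elim x 0
    rw [hx, map_zero, map_zero]
  have i1 := (resAway s).isoExt (R := A) 1 (ModuleCat.of A P)
  have e1 : Subsingleton (((Ext A (ModuleCat.{u} A) 1).obj
      (Opposite.op (ModuleCat.of A (Localization.Away s)))).obj (ModuleCat.of A P))
      ↔ Subsingleton (((Kc s).linearYonedaObj A (ModuleCat.of A P)).homology 1) :=
    Equiv.subsingleton_congr ((forget (ModuleCat A)).mapIso i1).toEquiv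
  rw [e1, subsingleton_iff_isZero, ← HomologicalComplex.exactAt_iff_isZero_homology,
    HomologicalComplex.exactAt_iff' _ 0 1 2 (by simp) (by simp),
    ShortComplex.moduleCat_exact_iff]
  have hd01 : ∀ g : (ModuleCat.of A (ℕ →₀ A)) ⟶ ModuleCat.of A P,
      ((Kc s).linearYonedaObj A (ModuleCat.of A P)).d 0 1 g = ModuleCat.ofHom (dlin s) ≫ g := by
    intro g
    rw [ChainComplex.linearYonedaObj_d]
    show (Kc s).d 1 0 ≫ g = _
    rw [Kc_d s 0]
    rfl
  constructor
  · intro hexact q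
    obtain ⟨y, hy⟩ := (Emap_bij (A := A) P).surjective q
    obtain ⟨g, hg⟩ := hexact y (by
      haveI : Subsingleton
          ((HomologicalComplex.sc' ((Kc s).linearYonedaObj A (ModuleCat.of A P)) 0 1 2).X₃ :
            Type u) := hsub2
      exact Subsingleton.elim _ _)
    refine ⟨Emap (A := A) P g, ?_⟩
    rw [← Emap_natural (A := A) s P g, ← hd01 g]
    have hg' : ((Kc s).linearYonedaObj A (ModuleCat.of A P)).d 0 1 g = y := hg
    rw [hg', hy]
  · intro hsurj y _
    obtain ⟨p, hp⟩ := hsurj (Emap (A := A) P y)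
    obtain ⟨g, hg⟩ := (Emap_bij (A := A) P).surjective p
    refine ⟨g, ?_⟩
    show ((Kc s).linearYonedaObj A (ModuleCat.of A P)).d 0 1 g = y
    rw [hd01]
    apply (Emap_bij (A := A) P).injective
    rw [Emap_natural (A := A), hg, hp]

lemma hom_eq_zero_of_inj (hinj : Injective ⇑(TE (LinearMap.lsmul A P s)))
    (g : Localization.Away s →ₗ[A] P) : g = 0 := by
  have hker : (fun n => g (xp s n)) = 0 := by
    apply (injective_iff_map_eq_zero _).mp hinj
    funext n
    show g (xp s n) - s • g (xp s (n+1)) = 0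
    rw [← map_smul, s_smul_xp_succ, sub_self]
  apply LinearMap.ext
  intro z
  obtain ⟨⟨a, ⟨y, hy⟩⟩, h⟩ := IsLocalization.mk'_surjective (Submonoid.powers s) z
  obtain ⟨n, rfl⟩ := hy
  have hz : z = a • xp s n := by rw [smul_xp]; exact h.symm
  rw [hz, map_smul]
  have h0 : g (xp s n) = 0 := congrFun hker n
  rw [h0, smul_zero]
  rfl

lemma inj_of_hom (hhom : ∀ g : Localization.Away s →ₗ[A] P, g = 0) :
    Injective ⇑(TE (LinearMap.lsmul A P s)) := by
  rw [injective_iff_map_eq_zero]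
  intro p hp
  have hcomp : (Finsupp.linearCombination A p).comp (dlin s) = 0 := by
    apply Finsupp.lhom_ext
    intro n b
    show Finsupp.linearCombination A p (dlin s (Finsupp.single n b)) = 0
    have h1 : Finsupp.single n b = b • Finsupp.single n (1:A) := by simp [Finsupp.smul_single]
    rw [h1, map_smul, map_smul, dlin_single, map_sub, Finsupp.linearCombination_single]
    have h2 : Finsupp.linearCombination A p (Finsupp.single (n+1) s) = s • p (n+1) := by
      have h3 : Finsupp.single (n+1) s = s • Finsupp.single (n+1) (1:A) := by
        simp [Finsupp.smul_single]
      rw [h3, map_smul, Finsupp.linearCombination_single, one_smul]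
    rw [h2, one_smul]
    have h4 : p n - s • p (n+1) = 0 := congrFun hp n
    rw [h4, smul_zero]
  have hple : LinearMap.ker (plin s) ≤ LinearMap.ker (Finsupp.linearCombination A p) := by
    intro b hbker
    obtain ⟨c, hc⟩ := ker_plin_le_range_dlin s b (LinearMap.mem_ker.mp hbker)
    rw [LinearMap.mem_ker, ← hc]
    exact congrFun (congrArg (fun (F : _ →ₗ[A] _) => ⇑F) hcomp) c
  set e := LinearMap.quotKerEquivOfSurjective (plin s) (plin_surj s) with hedef
  set g := (Submodule.liftQ _ (Finsupp.linearCombination A p) hple).comp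
    (e.symm : Localization.Away s →ₗ[A] ((ℕ →₀ A) ⧸ LinearMap.ker (plin s))) with hgdef
  have hg : ∀ b, g (plin s b) = Finsupp.linearCombination A p b := by
    intro b
    have he : e (Submodule.Quotient.mk b) = plin s b := rfl
    have he2 : e.symm (plin s b) = Submodule.Quotient.mk b :=
      (LinearEquiv.symm_apply_eq e).mpr he.symm
    show Submodule.liftQ _ (Finsupp.linearCombination A p) hple (e.symm (plin s b)) = _
    rw [he2, Submodule.liftQ_apply]
  have hg0 : g = 0 := hhom g
  funext n
  have := hg (Finsupp.single n 1)
  rw [hg0, Finsupp.linearCombination_single, one_smul] at this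
  have : p n = 0 := by
    rw [← this]
    rfl
  exact this

theorem good_iff :
    Good s P ↔ ((∀ g : Localization.Away s →ₗ[A] P, g = 0) ∧
      Subsingleton (((Ext A (ModuleCat.{u} A) 1).obj
        (Opposite.op (ModuleCat.of A (Localization.Away s)))).obj (ModuleCat.of A P))) := by
  constructor
  · intro h
    exact ⟨hom_eq_zero_of_inj s P h.injective, (ext_subsingleton_iff s P).mpr h.surjective⟩
  · rintro ⟨h1, h2⟩
    exact ⟨inj_of_hom s P h1, (ext_subsingleton_iff s P).mp h2⟩

end Hlgy

end Cat

end Res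

end ContraAux

/-- Let `R` be a commutative Noetherian ring, `I ⊆ R` an ideal, and `f : R → S` a
homomorphism of commutative rings such that `R` is `I`-adically complete and
separated and `S` is complete and separated in the adic topology of the ideal
`J = S·f(I)` generated by the image of `I`.  If `P` is an `S`-module whose
underlying `R`-module is an `I`-contramodule, then `P` is a `J`-contramodule
`S`-module. -/
theorem contramodule_extension_of_scalars
    (R S : Type u) [CommRing R] [IsNoetherianRing R] [CommRing S]
    (I : Ideal R) (f : R →+* S)
    [IsAdicComplete I R] [IsAdicComplete (I.map f) S]
    (P : Type u) [AddCommGroup P] [Module S P] :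
    letI : Module R P := Module.compHom P f
    IsContramoduleModule R I P → IsContramoduleModule S (I.map f) P := by
  letI : Module R P := Module.compHom P f
  intro hP
  have hgen : ∀ g ∈ (f '' (I : Set R)), ContraAux.Good g P := by
    rintro g ⟨r, hr, rfl⟩
    have h1 : ContraAux.Good r P :=
      (ContraAux.good_iff (A := R) r P).mpr ⟨(hP r hr).1, (hP r hr).2⟩
    have heq : ⇑(ContraAux.TE (LinearMap.lsmul R P r))
        = ⇑(ContraAux.TE (LinearMap.lsmul S P (f r))) := rfl
    unfold ContraAux.Good at h1 ⊢
    rw [← heq]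
    exact h1
  intro t ht
  have hgt : ContraAux.Good t P :=
    ContraAux.good_of_mem_span hgen (t := t) ht
  exact ((ContraAux.good_iff (A := S) t P).mp hgt)
end

section
/- Let R be a commutative ring, I ⊆ R an ideal, M an R-module, and P an R-module which is an I-contramodule. Then Hom_R(M, P) is an I-contramodule. -/
universe u

open CategoryTheory

noncomputable section ContraAux

namespace ContraAux

variable {R : Type u} [CommRing R]

/-- The telescope differential `e_n ↦ e_n - s • e_{n+1}`. -/
def D (s : R) : (ℕ →₀ R) →ₗ[R] (ℕ →₀ R) :=
  LinearMap.id - s • Finsupp.lmapDomain R R (· + 1)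

lemma D_apply_zero (s : R) (x : ℕ →₀ R) : D s x 0 = x 0 := by
  have h : (Finsupp.mapDomain (fun k => k + 1) x) 0 = (0 : R) :=
    Finsupp.mapDomain_notin_range x 0 (by simp)
  simp [D, h]

lemma D_apply_succ (s : R) (x : ℕ →₀ R) (n : ℕ) :
    D s x (n + 1) = x (n + 1) - s * x n := by
  simp [D, Finsupp.mapDomain_apply (add_left_injective 1) x n]

lemma D_injective (s : R) : Function.Injective (D s) := by
  rw [injective_iff_map_eq_zero]
  intro x hx
  have h0 : x 0 = 0 := by rw [← D_apply_zero s x, hx]; rfl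
  have hs : ∀ n, x n = 0 := by
    intro n
    induction n with
    | zero => exact h0
    | succ n ih =>
      have := D_apply_succ s x n
      rw [hx] at this
      have : (0 : R) = x (n + 1) - s * x n := this
      rw [ih, mul_zero, sub_zero] at this
      exact this.symm
  ext n; exact hs n

/-- `u s n = 1 / sⁿ` in `R[s⁻¹]`. -/
def u (s : R) (n : ℕ) : Localization.Away s :=
  Localization.mk 1 ⟨s ^ n, n, rfl⟩

lemma smul_u (s : R) (n : ℕ) : s • u s (n + 1) = u s n := by
  rw [u, u, Localization.smul_mk]
  rw [Localization.mk_eq_mk_iff]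
  apply Localization.r_of_eq
  simp [pow_succ, mul_comm, mul_assoc, mul_left_comm]

/-- The augmentation `e_n ↦ 1/sⁿ`. -/
def piA (s : R) : (ℕ →₀ R) →ₗ[R] Localization.Away s :=
  Finsupp.linearCombination R (u s)

lemma piA_single (s : R) (n : ℕ) (r : R) :
    piA s (Finsupp.single n r) = r • u s n := by
  simp [piA]

lemma piA_surjective (s : R) : Function.Surjective (piA s) := by
  intro z
  refine Localization.induction_on z ?_
  rintro ⟨r, t⟩
  obtain ⟨n, hn⟩ := t.2
  refine ⟨Finsupp.single n r, ?_⟩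
  rw [piA_single, u, Localization.smul_mk]
  congr 1
  · simp
  · exact Subtype.ext hn

lemma piA_comp_D (s : R) : (piA s).comp (D s) = 0 := by
  apply Finsupp.lhom_ext
  intro n r
  have h1 : D s (Finsupp.single n r) =
      Finsupp.single n r - s • Finsupp.single (n + 1) r := by
    simp [D, Finsupp.mapDomain_single, Finsupp.smul_single]
  simp only [LinearMap.comp_apply, h1, map_sub, map_smul, LinearMap.zero_apply,
    piA_single]
  rw [smul_comm, smul_u]
  simp

/-- `g x n = ∑_{k ≤ n} s^{n-k} x_k`. -/
private def gAux (s : R) (x : ℕ →₀ R) (n : ℕ) : R :=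
  ∑ k ∈ Finset.range (n + 1), s ^ (n - k) * x k

private lemma gAux_zero (s : R) (x : ℕ →₀ R) : gAux s x 0 = x 0 := by
  simp [gAux]

private lemma gAux_succ (s : R) (x : ℕ →₀ R) (n : ℕ) :
    gAux s x (n + 1) = x (n + 1) + s * gAux s x n := by
  rw [gAux, Finset.sum_range_succ, Nat.sub_self, pow_zero, one_mul, gAux,
    Finset.mul_sum]
  rw [add_comm]
  congr 1
  apply Finset.sum_congr rfl
  intro k hk
  rw [Finset.mem_range] at hk
  have : n + 1 - k = (n - k) + 1 := by omega
  rw [this, pow_succ]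
  ring

private lemma piA_eq_gAux (s : R) (x : ℕ →₀ R) (N : ℕ)
    (hN : ∀ k, N < k → x k = 0) : piA s x = gAux s x N • u s N := by
  have key : ∀ n : ℕ, (∑ k ∈ Finset.range (n + 1), x k • u s k)
      = gAux s x n • u s n := by
    intro n
    induction n with
    | zero => simp [gAux_zero]
    | succ n ih =>
      rw [Finset.sum_range_succ, ih, gAux_succ, add_smul, add_comm]
      congr 1
      rw [← smul_u s n, smul_comm, ← smul_assoc, smul_eq_mul]
  rw [← key N]
  rw [piA, Finsupp.linearCombination_apply,
    Finsupp.sum_of_support_subset x (s := Finset.range (N + 1))]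
  · intro k hk
    rw [Finset.mem_range]
    by_contra h
    exact Finsupp.mem_support_iff.1 hk (hN k (by omega))
  · intro k _
    simp

private lemma gAux_add (s : R) (x : ℕ →₀ R) (N : ℕ)
    (hN : ∀ k, N < k → x k = 0) (m : ℕ) :
    gAux s x (N + m) = s ^ m * gAux s x N := by
  induction m with
  | zero => simp
  | succ m ih =>
    rw [show N + (m + 1) = (N + m) + 1 by omega, gAux_succ, hN _ (by omega), ih,
      pow_succ]
    ring

lemma exists_of_piA_eq_zero (s : R) (x : ℕ →₀ R) (hx : piA s x = 0) :
    ∃ y, D s y = x := by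
  classical
  set N := x.support.sup id with hNdef
  have hN : ∀ k, N < k → x k = 0 := by
    intro k hk
    by_contra h
    have : k ∈ x.support := Finsupp.mem_support_iff.2 h
    have : k ≤ N := Finset.le_sup (f := id) this
    omega
  have hmk : gAux s x N • u s N = 0 := by rw [← piA_eq_gAux s x N hN, hx]
  -- extract `s ^ m * gAux s x N = 0`
  have : (Localization.mk (gAux s x N) ⟨s ^ N, N, rfl⟩ :
      Localization.Away s) = 0 := by
    rw [← hmk, u, Localization.smul_mk, smul_eq_mul, mul_one]
  rw [← Localization.mk_zero (1 : Submonoid.powers s), Localization.mk_eq_mk_iff,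
    Localization.r_iff_exists] at this
  obtain ⟨⟨c, m, hc⟩, hcm⟩ := this
  simp only [OneMemClass.coe_one, one_mul, mul_zero] at hcm
  have hsm : s ^ m * gAux s x N = 0 := by
    subst hc; exact hcm
  have hvanish : ∀ n, N + m ≤ n → gAux s x n = 0 := by
    intro n hn
    obtain ⟨k, rfl⟩ : ∃ k, n = N + m + k := ⟨n - (N + m), by omega⟩
    rw [show N + m + k = N + (m + k) by omega, gAux_add s x N hN, pow_add]
    rw [mul_assoc, mul_comm (s ^ k), ← mul_assoc, hsm, zero_mul]
  refine ⟨Finsupp.onFinset (Finset.range (N + m)) (gAux s x) ?_, ?_⟩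
  · intro n hn
    rw [Finset.mem_range]
    by_contra h
    exact hn (hvanish n (by omega))
  · ext n
    cases n with
    | zero =>
      rw [D_apply_zero]
      simpa using (gAux_zero s x).symm ▸ (by simp [gAux_zero] : _)
    | succ n =>
      rw [D_apply_succ]
      simp only [Finsupp.onFinset_apply]
      rw [gAux_succ]
      ring

end ContraAux

end ContraAux


namespace ContraAux

noncomputable section

open CategoryTheory Limits

variable (R : Type u) [CommRing R] (s : R)

/-- Degree-`n` term of the telescope complex. -/
def teleX : ℕ → ModuleCat.{u} R
  | 0 => ModuleCat.of R (ℕ →₀ R)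
  | 1 => ModuleCat.of R (ℕ →₀ R)
  | _ + 2 => ModuleCat.of R PUnit

/-- Differentials of the telescope complex. -/
def teleD : ∀ i j : ℕ, teleX R i ⟶ teleX R j
  | 1, 0 => ModuleCat.ofHom (D s)
  | 0, _ => 0
  | 1, _ + 1 => 0
  | _ + 2, _ => 0

/-- The telescope complex `⋯ → 0 → R^(ℕ) → R^(ℕ)`. -/
def tele : ChainComplex (ModuleCat.{u} R) ℕ where
  X := teleX R
  d := teleD R s
  shape i j h := by
    match i, j with
    | 1, 0 => exact absurd rfl h
    | 0, j => rfl
    | 1, j + 1 => rfl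
    | i + 2, j => rfl
  d_comp_d' i j k _ _ := by
    match i, j with
    | 1, 0 => rw [show teleD R s 0 k = 0 from rfl, comp_zero]
    | 0, j => rw [show teleD R s 0 j = 0 from rfl, zero_comp]
    | 1, j + 1 => rw [show teleD R s 1 (j + 1) = 0 from rfl, zero_comp]
    | i + 2, j => rw [show teleD R s (i + 2) j = 0 from rfl, zero_comp]

instance teleProjective (n : ℕ) : Projective ((tele R s).X n) := by
  match n with
  | 0 =>
    exact ModuleCat.projective_of_free.{u, u, 0}
        (M := ModuleCat.of R (ℕ →₀ R)) Finsupp.basisSingleOne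
  | 1 =>
    exact ModuleCat.projective_of_free.{u, u, 0}
        (M := ModuleCat.of R (ℕ →₀ R)) Finsupp.basisSingleOne
  | n + 2 =>
    exact ModuleCat.projective_of_free.{u, u, 0}
        (M := ModuleCat.of R PUnit.{u + 1})
        (Module.Basis.empty PUnit.{u + 1} : Module.Basis PEmpty.{1} R PUnit.{u + 1})

lemma tele_d_one_zero : (tele R s).d 1 0 = ModuleCat.ofHom (D s) := rfl

/-- The augmentation chain map to `R[s⁻¹]` in degree 0. -/
def telePi : tele R s ⟶
    (ChainComplex.single₀ (ModuleCat.{u} R)).obj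
      (ModuleCat.of R (Localization.Away s)) :=
  (ChainComplex.toSingle₀Equiv _ _).symm
    ⟨ModuleCat.ofHom (piA s), by
      rw [tele_d_one_zero]
      exact congrArg ModuleCat.ofHom (piA_comp_D s)⟩

lemma telePi_f_zero : (telePi R s).f 0 = ModuleCat.ofHom (piA s) :=
  ChainComplex.toSingle₀Equiv_symm_apply_f_zero _ _

/-- A cokernel-style criterion for `descOpcycles` being an isomorphism in `ModuleCat`. -/
lemma isIso_descOpcycles_of {S : ShortComplex (ModuleCat.{u} R)} {Z : ModuleCat.{u} R}
    (k : S.X₂ ⟶ Z) (hk : S.f ≫ k = 0)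
    (hsurj : Function.Surjective k)
    (hker : ∀ y, k y = 0 → ∃ w, S.f w = y) :
    IsIso (S.descOpcycles k hk) := by
  have hp : Function.Surjective S.pOpcycles :=
    (ModuleCat.epi_iff_surjective _).1 inferInstance
  have hmono : Mono (S.descOpcycles k hk) := by
    rw [ModuleCat.mono_iff_injective]
    rw [injective_iff_map_eq_zero]
    intro z hz
    obtain ⟨y, rfl⟩ := hp z
    have hy : k y = 0 := by
      rw [← ConcreteCategory.congr_hom (S.p_descOpcycles k hk) y]
      exact hz
    obtain ⟨w, hw⟩ := hker y hy
    rw [← hw]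
    exact ConcreteCategory.congr_hom S.f_pOpcycles w
  have hepi : Epi (S.descOpcycles k hk) := by
    rw [ModuleCat.epi_iff_surjective]
    intro a
    obtain ⟨y, hy⟩ := hsurj a
    exact ⟨S.pOpcycles y, by rw [← hy]; exact ConcreteCategory.congr_hom (S.p_descOpcycles k hk) y⟩
  exact isIso_of_mono_of_epi _

instance telePi_quasiIso : QuasiIso (telePi R s) where
  quasiIsoAt n := by
    cases n with
    | zero =>
      rw [quasiIsoAt_iff' _ 1 0 0 (by simp) (by simp),
        ShortComplex.quasiIso_iff_isIso_descOpcycles _ rfl rfl rfl]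
      have hτ : ((HomologicalComplex.shortComplexFunctor' (ModuleCat.{u} R) _ 1 0 0).map
          (telePi R s)).τ₂ = ModuleCat.ofHom (piA s) := telePi_f_zero R s
      apply isIso_descOpcycles_of
      · rw [hτ]
        exact piA_surjective s
      · intro y hy
        rw [hτ] at hy
        exact exists_of_piA_eq_zero s y hy
    | succ n =>
      rw [quasiIsoAt_iff_exactAt' (telePi R s) (n + 1)
        (ChainComplex.exactAt_succ_single_obj _ _)]
      rw [HomologicalComplex.exactAt_iff' _ (n + 2) (n + 1) n (by simp) (by simp)]
      cases n with
      | zero =>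
        rw [ShortComplex.moduleCat_exact_iff]
        intro x hx
        have hx0 : x = 0 := by
          apply D_injective s
          exact hx.trans (map_zero (D s)).symm
        exact ⟨0, by rw [map_zero, hx0]⟩
      | succ n =>
        exact ShortComplex.exact_of_isZero_X₂ _
          (ModuleCat.isZero_of_subsingleton (ModuleCat.of R PUnit.{u + 1}))

/-- The telescope projective resolution of `R[s⁻¹]`. -/
def teleRes : ProjectiveResolution (ModuleCat.of R (Localization.Away s)) where
  complex := tele R s
  projective := teleProjective R s
  π := telePi R s

lemma isZero_iff_subsingleton (N : ModuleCat.{u} R) : IsZero N ↔ Subsingleton N := by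
  constructor
  · intro h
    refine ⟨fun a b => ?_⟩
    have h0 : (𝟙 N : N ⟶ N) = 0 := h.eq_of_src _ _
    calc a = (𝟙 N : N ⟶ N) a := rfl
      _ = (0 : N ⟶ N) a := by rw [h0]
      _ = (0 : N ⟶ N) b := rfl
      _ = (𝟙 N : N ⟶ N) b := by rw [h0]
      _ = b := rfl
  · intro h
    exact ModuleCat.isZero_of_subsingleton N

/-- `Ext¹(R[s⁻¹], Y)` vanishes iff precomposition with the telescope differential is
surjective on `Hom(R^(ℕ), Y)`. -/
lemma subsingleton_ext_iff (Y : ModuleCat.{u} R) :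
    Subsingleton
      (((Ext R (ModuleCat.{u} R) 1).obj
          (Opposite.op (ModuleCat.of R (Localization.Away s)))).obj Y) ↔
      Function.Surjective (fun φ : (ℕ →₀ R) →ₗ[R] Y => φ ∘ₗ D s) := by
  have e := (teleRes R s).isoExt (R := R) 1 Y
  have h1 : Subsingleton
      (((Ext R (ModuleCat.{u} R) 1).obj
          (Opposite.op (ModuleCat.of R (Localization.Away s)))).obj Y) ↔
      Subsingleton (((tele R s).linearYonedaObj R Y).homology 1) :=
    Equiv.subsingleton_congr ((forget (ModuleCat.{u} R)).mapIso e).toEquiv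
  rw [h1, ← isZero_iff_subsingleton, ← HomologicalComplex.exactAt_iff_isZero_homology,
    HomologicalComplex.exactAt_iff' _ 0 1 2 (by simp) (by simp),
    ShortComplex.moduleCat_exact_iff]
  haveI hPU : Subsingleton ↑((tele R s).X 2) := inferInstanceAs (Subsingleton PUnit.{u + 1})
  haveI hs3 : Subsingleton
      ↑((HomologicalComplex.sc' ((tele R s).linearYonedaObj R Y) 0 1 2).X₃) := by
    constructor
    intro f g
    exact ModuleCat.hom_ext (LinearMap.ext fun x => by rw [Subsingleton.elim x 0, map_zero, map_zero])
  have hd : ∀ φ : ((tele R s).X 0 ⟶ Y),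
      (((tele R s).linearYonedaObj R Y).d 0 1 φ).hom = φ.hom ∘ₗ D s := by
    intro φ
    rfl
  constructor
  · intro h ψ
    obtain ⟨φ, hφ⟩ := h (ModuleCat.ofHom ψ) (Subsingleton.elim _ _)
    refine ⟨φ.hom, ?_⟩
    exact (hd φ).symm.trans (congrArg ModuleCat.Hom.hom hφ)
  · intro h ψ _
    obtain ⟨φ, hφ⟩ := h ψ.hom
    refine ⟨ModuleCat.ofHom φ, ModuleCat.hom_ext ?_⟩
    exact (hd _).trans hφ

end

end ContraAux

/-- Let `R` be a commutative ring, `I ⊆ R` an ideal, `M` an `R`-module and `P` an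
`R`-module which is an `I`-contramodule.  Then `Hom_R(M, P)` is an
`I`-contramodule. -/
theorem hom_into_contramodule_is_contramodule
    (R : Type u) [CommRing R] (I : Ideal R) (M P : Type u)
    [AddCommGroup M] [Module R M] [AddCommGroup P] [Module R P]
    (hP : IsContramoduleModule R I P) :
    IsContramoduleModule R I (M →ₗ[R] P) := by
  intro s hs
  obtain ⟨hHom, hExt⟩ := hP s hs
  constructor
  · intro g
    refine LinearMap.ext fun a => LinearMap.ext fun m => ?_
    simpa using LinearMap.congr_fun (hHom (g.flip m)) a
  · -- vanishing of `Ext¹`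
    rw [ContraAux.subsingleton_ext_iff R s (ModuleCat.of R (M →ₗ[R] P))]
    -- first, `- ∘ D` is bijective on `Hom(R^(ℕ), P)`
    have hsurjP : Function.Surjective
        (fun φ : (ℕ →₀ R) →ₗ[R] P => φ ∘ₗ ContraAux.D s) :=
      (ContraAux.subsingleton_ext_iff R s (ModuleCat.of R P)).1 hExt
    have hvanish : ∀ φ : (ℕ →₀ R) →ₗ[R] P, φ ∘ₗ ContraAux.D s = 0 → φ = 0 := by
      intro φ hφ
      have hle : LinearMap.ker (ContraAux.piA s) ≤ LinearMap.ker φ := by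
        intro y hy
        rw [LinearMap.mem_ker] at hy ⊢
        obtain ⟨w, hw⟩ := ContraAux.exists_of_piA_eq_zero s y hy
        rw [← hw]
        exact LinearMap.congr_fun hφ w
      set e := (ContraAux.piA s).quotKerEquivOfSurjective (ContraAux.piA_surjective s)
        with he
      set ψ := (LinearMap.ker (ContraAux.piA s)).liftQ φ hle with hψdef
      have hψ : ψ ∘ₗ (e.symm : Localization.Away s →ₗ[R] _) = 0 := hHom _
      refine LinearMap.ext fun x => ?_
      have h1 : φ x = ψ (Submodule.Quotient.mk x) := by
        rw [hψdef, Submodule.liftQ_apply]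
      have h2 : ψ (Submodule.Quotient.mk x) =
          (ψ ∘ₗ (e.symm : Localization.Away s →ₗ[R] _)) (e (Submodule.Quotient.mk x)) := by
        simp
      rw [h1, h2, hψ]
      rfl
    have hinjP : Function.Injective
        (fun φ : (ℕ →₀ R) →ₗ[R] P => φ ∘ₗ ContraAux.D s) := by
      intro φ₁ φ₂ hfe
      have h0 : (φ₁ - φ₂) ∘ₗ ContraAux.D s = 0 := by
        rw [LinearMap.sub_comp, sub_eq_zero]
        exact hfe
      have := hvanish _ h0
      rwa [sub_eq_zero] at this
    obtain ⟨E, hE⟩ : ∃ E : ((ℕ →₀ R) →ₗ[R] P) ≃ₗ[R] ((ℕ →₀ R) →ₗ[R] P),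
        ∀ h : (ℕ →₀ R) →ₗ[R] P, E h = h ∘ₗ ContraAux.D s :=
      ⟨LinearEquiv.ofBijective (LinearMap.lcomp R P (ContraAux.D s)) ⟨hinjP, hsurjP⟩,
        fun h => rfl⟩
    show Function.Surjective (fun φ : (ℕ →₀ R) →ₗ[R] (M →ₗ[R] P) => φ ∘ₗ ContraAux.D s)
    intro ψ
    refine ⟨(E.symm.toLinearMap ∘ₗ ψ.flip).flip, ?_⟩
    refine LinearMap.ext fun x => LinearMap.ext fun m => ?_
    have h2 : E (E.symm (ψ.flip m)) = ψ.flip m := E.apply_symm_apply _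
    rw [hE] at h2
    calc (((E.symm.toLinearMap ∘ₗ ψ.flip).flip ∘ₗ ContraAux.D s) x) m
        = (E.symm (ψ.flip m) ∘ₗ ContraAux.D s) x := rfl
      _ = ψ.flip m x := by rw [h2]
      _ = ψ x m := rfl
end
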